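/- arXiv:2010.05746 — 4 statements merged into one kernel-verified Lean document; each statement's English description precedes it below -/
import Mathlib

section
/- The collection of exponentials {e^{−2πiλω} : λ ∈ Ω}, with Ω = {0, r/N} + 2ℤ, forms an orthonormal basis of L²(Δ) where Δ = [0, 1/2) ∪ [N/2, (N+1)/2); that is, (Ω, Δ) is a spectral pair. -/
open MeasureTheory Complex Real ComplexConjugate

noncomputable section

/-- The nonuniform translation set Ω = {0, r/N} + 2ℤ. -/
def Omega (N : ℕ) (r : ℤ) : Set ℝ :=
  {x | ∃ n : ℤ, x = 2 * (n : ℝ) ∨ x = (r : ℝ) / (N : ℝ) + 2 * (n : ℝ)}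

/-- The spectral set Δ = [0, 1/2) ∪ [N/2, (N+1)/2). -/
def Delta (N : ℕ) : Set ℝ :=
  Set.Ico (0 : ℝ) (1 / 2) ∪ Set.Ico ((N : ℝ) / 2) (((N : ℝ) + 1) / 2)

open Set AddCircle

section Helpers

variable {N : ℕ} {r : ℤ} {f : ℝ → ℂ}

lemma delta_subset_Icc (N : ℕ) (hN : 1 ≤ N) : Delta N ⊆ Set.Icc (0:ℝ) (((N:ℝ)+1)/2) := by
  have h1 : (1:ℝ) ≤ N := by exact_mod_cast hN
  rintro x (hx | hx) <;> constructor <;>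
    simp only [Set.mem_Ico] at hx <;> [skip; skip; skip; skip] <;>
    first
      | linarith [hx.1, hx.2]

lemma cont_integrableOn (N : ℕ) (hN : 1 ≤ N) {h : ℝ → ℂ} (hc : Continuous h) :
    IntegrableOn h (Delta N) :=
  (hc.integrableOn_Icc).mono_set (delta_subset_Icc N hN)

lemma hc_ne (d : ℝ) (hd : d ≠ 0) : (-2 * ↑π * I * (d:ℂ)) ≠ 0 := by
  exact mul_ne_zero (mul_ne_zero (mul_ne_zero (by norm_num)
    (Complex.ofReal_ne_zero.mpr Real.pi_ne_zero)) I_ne_zero) (Complex.ofReal_ne_zero.mpr hd)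

lemma conj_exp (a x : ℝ) :
    conj (Complex.exp (-2 * ↑π * I * ↑a * ↑x)) = Complex.exp (2 * ↑π * I * ↑a * ↑x) := by
  rw [← Complex.exp_conj]
  congr 1
  simp only [map_mul, map_neg, map_ofNat, Complex.conj_ofReal, Complex.conj_I]
  ring

lemma exp_odd_pi (m : ℤ) (hm : Odd m) : Complex.exp (↑m * (↑π * I)) = -1 := by
  rw [Complex.exp_int_mul, Complex.exp_mul_I]
  simp [Complex.cos_pi, Complex.sin_pi]
  exact (hm.neg_one_zpow)

lemma exp_two_pi_int (m : ℤ) : Complex.exp (↑m * (2 * ↑π * I)) = 1 :=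
  Complex.exp_int_mul_two_pi_mul_I m

lemma fold (N : ℕ) (hN : 1 ≤ N) (h : ℝ → ℂ) (hint : IntegrableOn h (Delta N)) :
    ∫ ω in Delta N, h ω
      = (∫ x in (0:ℝ)..(1/2), h x) + ∫ x in (0:ℝ)..(1/2), h (x + (N:ℝ)/2) := by
  have hN2 : (1:ℝ)/2 ≤ (N:ℝ)/2 := by
    have : (1:ℝ) ≤ N := by exact_mod_cast hN
    linarith
  have hdisj : Disjoint (Set.Ico (0 : ℝ) (1 / 2)) (Set.Ico ((N : ℝ) / 2) (((N : ℝ) + 1) / 2)) :=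
    Set.Ico_disjoint_Ico.mpr (by
      exact le_trans (min_le_left _ _) (le_max_of_le_right hN2))
  have h1 : IntegrableOn h (Set.Ico (0:ℝ) (1/2)) := hint.mono_set Set.subset_union_left
  have h2 : IntegrableOn h (Set.Ico ((N:ℝ)/2) (((N:ℝ)+1)/2)) :=
    hint.mono_set Set.subset_union_right
  rw [Delta, setIntegral_union hdisj measurableSet_Ico h1 h2]
  congr 1
  · rw [intervalIntegral.integral_of_le (by norm_num), integral_Ioc_eq_integral_Ioo,
      integral_Ico_eq_integral_Ioo]
  · rw [intervalIntegral.integral_comp_add_right (fun x => h x) ((N:ℝ)/2)]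
    rw [intervalIntegral.integral_of_le (by linarith), integral_Ioc_eq_integral_Ioo,
      integral_Ico_eq_integral_Ioo]
    norm_num
    ring_nf

lemma key_zero (N : ℕ) (hN : 1 ≤ N) (d : ℝ) (hd : d ≠ 0)
    (h : Complex.exp (-2 * ↑π * I * ↑d * (1/2 : ℂ)) = 1 ∨
         Complex.exp (-2 * ↑π * I * ↑d * ((N : ℂ)/2)) = -1) :
    ∫ ω in Delta N, Complex.exp (-2 * ↑π * I * ↑d * ↑ω) = 0 := by
  set c : ℂ := -2 * ↑π * I * ↑d with hc
  have hcne : c ≠ 0 := hc_ne d hd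
  have hcont : Continuous (fun ω : ℝ => Complex.exp (c * ↑ω)) := by
    exact Complex.continuous_exp.comp (by continuity)
  rw [fold N hN _ (cont_integrableOn N hN hcont)]
  have hI1 : (∫ x in (0:ℝ)..(1/2), Complex.exp (c * ↑x))
      = (Complex.exp (c * (1/2 : ℂ)) - 1) / c := by
    rw [integral_exp_mul_complex hcne]
    norm_num
  have hI2 : (∫ x in (0:ℝ)..(1/2), Complex.exp (c * ↑(x + (N:ℝ)/2)))
      = Complex.exp (c * ((N:ℂ)/2)) * ((Complex.exp (c * (1/2 : ℂ)) - 1) / c) := by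
    have : ∀ x : ℝ, Complex.exp (c * ↑(x + (N:ℝ)/2))
        = Complex.exp (c * ((N:ℂ)/2)) * Complex.exp (c * ↑x) := by
      intro x
      rw [← Complex.exp_add]
      congr 1
      push_cast
      ring
    simp_rw [this]
    rw [intervalIntegral.integral_const_mul, hI1]
  rw [hI1, hI2]
  rcases h with h1 | h2
  · rw [h1]; simp
  · rw [h2]; field_simp; ring

lemma volume_delta (N : ℕ) (hN : 1 ≤ N) : volume (Delta N) = 1 := by
  have hN2 : (1:ℝ)/2 ≤ (N:ℝ)/2 := by
    have : (1:ℝ) ≤ N := by exact_mod_cast hN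
    linarith
  have hdisj : Disjoint (Set.Ico (0 : ℝ) (1 / 2)) (Set.Ico ((N : ℝ) / 2) (((N : ℝ) + 1) / 2)) :=
    Set.Ico_disjoint_Ico.mpr (le_trans (min_le_left _ _) (le_max_of_le_right hN2))
  rw [Delta, measure_union hdisj measurableSet_Ico, Real.volume_Ico, Real.volume_Ico,
    ← ENNReal.ofReal_add (by norm_num) (by linarith)]
  norm_num
  ring

lemma ortho (N : ℕ) (r : ℤ) (hN : 1 ≤ N) (hodd : Odd r) :
    ∀ lam ∈ Omega N r, ∀ sig ∈ Omega N r,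
        ∫ ω in Delta N,
          Complex.exp (-2 * π * I * lam * ω) * conj (Complex.exp (-2 * π * I * sig * ω))
          = if lam = sig then 1 else 0 := by
  intro lam hlam sig hsig
  have hNR : (N:ℝ) ≠ 0 := by positivity
  have hNC : (N:ℂ) ≠ 0 := by exact_mod_cast hNR
  have hstep : ∀ ω : ℝ, Complex.exp (-2 * ↑π * I * ↑lam * ↑ω) * conj (Complex.exp (-2 * ↑π * I * ↑sig * ↑ω))
      = Complex.exp (-2 * ↑π * I * ↑(lam - sig) * ↑ω) := by
    intro ω
    rw [conj_exp, ← Complex.exp_add]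
    congr 1
    push_cast
    ring
  simp_rw [hstep]
  by_cases heq : lam = sig
  · simp only [heq, if_pos rfl, sub_self]
    norm_num
    rw [Measure.real, volume_delta N hN]
    simp
  · rw [if_neg heq]
    have hsub : lam - sig ≠ 0 := sub_ne_zero.mpr heq
    obtain ⟨n, hn⟩ := hlam
    obtain ⟨m, hm⟩ := hsig
    apply key_zero N hN _ hsub
    rcases hn with hn | hn <;> rcases hm with hm | hm
    · left
      have : Complex.exp (-2 * ↑π * I * ↑(lam - sig) * (1/2 : ℂ))
          = Complex.exp (↑(m - n) * (2 * ↑π * I)) := by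
        congr 1
        rw [hn, hm]
        push_cast
        ring
      rw [this, exp_two_pi_int]
    · right
      have : Complex.exp (-2 * ↑π * I * ↑(lam - sig) * ((N:ℂ)/2))
          = Complex.exp (↑(r + 2*(m - n)*N) * (↑π * I)) := by
        congr 1
        rw [hn, hm]
        push_cast
        field_simp
        ring
      rw [this, exp_odd_pi]
      exact hodd.add_even (by exact even_two_mul _ |>.mul_right _)
    · right
      have : Complex.exp (-2 * ↑π * I * ↑(lam - sig) * ((N:ℂ)/2))
          = Complex.exp (↑(-r + 2*(m - n)*N) * (↑π * I)) := by
        congr 1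
        rw [hn, hm]
        push_cast
        field_simp
        ring
      rw [this, exp_odd_pi]
      exact (hodd.neg).add_even (by exact even_two_mul _ |>.mul_right _)
    · left
      have : Complex.exp (-2 * ↑π * I * ↑(lam - sig) * (1/2 : ℂ))
          = Complex.exp (↑(m - n) * (2 * ↑π * I)) := by
        congr 1
        rw [hn, hm]
        push_cast
        ring
      rw [this, exp_two_pi_int]

lemma integrableOn_delta (hN : 1 ≤ N) (hf : MemLp f 2 (volume.restrict (Delta N))) :
    IntegrableOn f (Delta N) := by
  haveI : IsFiniteMeasure (volume.restrict (Delta N)) := by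
    constructor
    rw [Measure.restrict_apply_univ, volume_delta N hN]
    exact ENNReal.one_lt_top
  exact memLp_one_iff_integrable.mp (hf.mono_exponent (by norm_num))

/-- interval integrability of f and shifted f times a bounded continuous multiplier -/

lemma ii_one (hN : 1 ≤ N) (hf : IntegrableOn f (Delta N)) (E : ℝ → ℂ)
    (hE : Continuous E) (hEb : ∀ x, ‖E x‖ ≤ 1) :
    IntervalIntegrable (fun x => f x * E x) volume 0 (1/2) := by
  rw [intervalIntegrable_iff_integrableOn_Ioc_of_le (by norm_num)]
  have h1 : IntegrableOn f (Set.Ioc (0:ℝ) (1/2)) := by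
    rw [IntegrableOn, Measure.restrict_congr_set Ico_ae_eq_Ioc.symm]
    exact hf.mono_set Set.subset_union_left
  have := h1.bdd_mul (hE.aestronglyMeasurable) (c := 1) (ae_of_all _ hEb)
  exact this.congr (ae_of_all _ fun x => mul_comm _ _)

lemma ii_two (hN : 1 ≤ N) (hf : IntegrableOn f (Delta N)) (E : ℝ → ℂ)
    (hE : Continuous E) (hEb : ∀ x, ‖E x‖ ≤ 1) :
    IntervalIntegrable (fun x => f (x + (N:ℝ)/2) * E x) volume 0 (1/2) := by
  have hN2 : (N:ℝ)/2 ≤ ((N:ℝ)+1)/2 := by linarith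
  have h1 : IntegrableOn f (Set.Ioc ((N:ℝ)/2) (((N:ℝ)+1)/2)) := by
    rw [IntegrableOn, Measure.restrict_congr_set Ico_ae_eq_Ioc.symm]
    exact hf.mono_set Set.subset_union_right
  have h2 : IntervalIntegrable f volume ((N:ℝ)/2) (((N:ℝ)+1)/2) :=
    (intervalIntegrable_iff_integrableOn_Ioc_of_le hN2).mpr h1
  have h3 := h2.comp_add_right ((N:ℝ)/2)
  rw [show (N:ℝ)/2 - (N:ℝ)/2 = 0 by ring, show ((N:ℝ)+1)/2 - (N:ℝ)/2 = 1/2 by ring] at h3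
  have h4 : IntegrableOn (fun x => f (x + (N:ℝ)/2)) (Set.Ioc (0:ℝ) (1/2)) :=
    (intervalIntegrable_iff_integrableOn_Ioc_of_le (by norm_num)).mp h3
  rw [intervalIntegrable_iff_integrableOn_Ioc_of_le (by norm_num)]
  have := h4.bdd_mul (hE.aestronglyMeasurable) (c := 1) (ae_of_all _ hEb)
  exact this.congr (ae_of_all _ fun x => mul_comm _ _)

lemma norm_exp_real_mul_I (z : ℂ) (t : ℝ) (h : z = ↑t * I) : ‖Complex.exp z‖ = 1 := by
  rw [h, Complex.norm_exp_ofReal_mul_I]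

lemma master_plus (hN : 1 ≤ N) (hf : MemLp f 2 (volume.restrict (Delta N)))
    (horth : ∀ lam ∈ Omega N r,
      ∫ ω in Delta N, f ω * conj (Complex.exp (-2 * π * I * lam * ω)) = 0) (a : ℤ) :
    ∫ x in (0:ℝ)..(1/2),
      (f x + f (x + (N:ℝ)/2)) * Complex.exp (2 * ↑π * I * (2*(a:ℝ) : ℝ) * ↑x) = 0 := by
  set lam : ℝ := 2*(a:ℝ) with hlam
  have hfD : IntegrableOn f (Delta N) := integrableOn_delta hN hf
  have hE : Continuous fun x : ℝ => Complex.exp (2 * ↑π * I * (lam:ℝ) * ↑x) :=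
    Complex.continuous_exp.comp (by continuity)
  have hEb : ∀ x : ℝ, ‖Complex.exp (2 * ↑π * I * (lam:ℝ) * (x:ℂ))‖ ≤ 1 := fun x =>
    le_of_eq (norm_exp_real_mul_I _ (2*π*lam*x) (by push_cast; ring))
  have H := horth lam ⟨a, Or.inl rfl⟩
  simp_rw [conj_exp lam] at H
  have hintD : IntegrableOn (fun ω => f ω * Complex.exp (2 * ↑π * I * (lam:ℝ) * ↑ω)) (Delta N) :=
    (hfD.bdd_mul hE.aestronglyMeasurable (c := 1) (ae_of_all _ hEb)).congr (ae_of_all _ fun x => mul_comm _ _)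
  rw [fold N hN _ hintD] at H
  have hshift : ∀ x : ℝ, f (x + (N:ℝ)/2) * Complex.exp (2 * ↑π * I * (lam:ℝ) * (↑(x + (N:ℝ)/2)))
      = f (x + (N:ℝ)/2) * Complex.exp (2 * ↑π * I * (lam:ℝ) * ↑x) := by
    intro x
    congr 1
    have : (2 * ↑π * I * (lam:ℝ) * (↑(x + (N:ℝ)/2)) : ℂ)
        = 2 * ↑π * I * (lam:ℝ) * ↑x + ↑(a * (N:ℤ)) * (2 * ↑π * I) := by
      push_cast [hlam]; ring
    rw [this, Complex.exp_add, exp_two_pi_int, mul_one]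
  simp_rw [hshift] at H
  calc ∫ x in (0:ℝ)..(1/2), (f x + f (x + (N:ℝ)/2)) * Complex.exp (2 * ↑π * I * (lam:ℝ) * ↑x)
      = ∫ x in (0:ℝ)..(1/2), (f x * Complex.exp (2 * ↑π * I * (lam:ℝ) * ↑x)
          + f (x + (N:ℝ)/2) * Complex.exp (2 * ↑π * I * (lam:ℝ) * ↑x)) := by
        apply intervalIntegral.integral_congr
        intro x _
        ring
    _ = (∫ x in (0:ℝ)..(1/2), f x * Complex.exp (2 * ↑π * I * (lam:ℝ) * ↑x))
          + ∫ x in (0:ℝ)..(1/2), f (x + (N:ℝ)/2) * Complex.exp (2 * ↑π * I * (lam:ℝ) * ↑x) :=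
        intervalIntegral.integral_add (ii_one hN hfD _ hE hEb) (ii_two hN hfD _ hE hEb)
    _ = 0 := H

lemma master_minus (hN : 1 ≤ N) (hodd : Odd r) (hf : MemLp f 2 (volume.restrict (Delta N)))
    (horth : ∀ lam ∈ Omega N r,
      ∫ ω in Delta N, f ω * conj (Complex.exp (-2 * π * I * lam * ω)) = 0) (a : ℤ) :
    ∫ x in (0:ℝ)..(1/2),
      (Complex.exp (2 * ↑π * I * ((r:ℝ)/(N:ℝ) : ℝ) * ↑x) * (f x - f (x + (N:ℝ)/2)))
        * Complex.exp (2 * ↑π * I * (2*(a:ℝ) : ℝ) * ↑x) = 0 := by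
  have hNR : (N:ℝ) ≠ 0 := by positivity
  have hNC : (N:ℂ) ≠ 0 := by exact_mod_cast hNR
  set lam : ℝ := (r:ℝ)/(N:ℝ) + 2*(a:ℝ) with hlam
  have hfD : IntegrableOn f (Delta N) := integrableOn_delta hN hf
  have hE : Continuous fun x : ℝ => Complex.exp (2 * ↑π * I * (lam:ℝ) * ↑x) :=
    Complex.continuous_exp.comp (by continuity)
  have hEb : ∀ x : ℝ, ‖Complex.exp (2 * ↑π * I * (lam:ℝ) * (x:ℂ))‖ ≤ 1 := fun x =>
    le_of_eq (norm_exp_real_mul_I _ (2*π*lam*x) (by push_cast; ring))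
  have H := horth lam ⟨a, Or.inr rfl⟩
  simp_rw [conj_exp lam] at H
  have hintD : IntegrableOn (fun ω => f ω * Complex.exp (2 * ↑π * I * (lam:ℝ) * ↑ω)) (Delta N) :=
    (hfD.bdd_mul hE.aestronglyMeasurable (c := 1) (ae_of_all _ hEb)).congr (ae_of_all _ fun x => mul_comm _ _)
  rw [fold N hN _ hintD] at H
  have hshift : ∀ x : ℝ, f (x + (N:ℝ)/2) * Complex.exp (2 * ↑π * I * (lam:ℝ) * (↑(x + (N:ℝ)/2)))
      = -(f (x + (N:ℝ)/2) * Complex.exp (2 * ↑π * I * (lam:ℝ) * ↑x)) := by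
    intro x
    have harg : (2 * ↑π * I * (lam:ℝ) * (↑(x + (N:ℝ)/2)) : ℂ)
        = 2 * ↑π * I * (lam:ℝ) * ↑x + ↑(r + 2*a*(N:ℤ)) * (↑π * I) := by
      push_cast [hlam]
      field_simp
    rw [harg, Complex.exp_add, exp_odd_pi _ (hodd.add_even (even_two_mul a |>.mul_right _))]
    ring
  simp_rw [hshift] at H
  have hptwise : ∀ x : ℝ,
      (Complex.exp (2 * ↑π * I * ((r:ℝ)/(N:ℝ) : ℝ) * ↑x) * (f x - f (x + (N:ℝ)/2)))
        * Complex.exp (2 * ↑π * I * (2*(a:ℝ) : ℝ) * ↑x)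
      = f x * Complex.exp (2 * ↑π * I * (lam:ℝ) * ↑x)
        - f (x + (N:ℝ)/2) * Complex.exp (2 * ↑π * I * (lam:ℝ) * ↑x) := by
    intro x
    have : Complex.exp (2 * ↑π * I * (lam:ℝ) * ↑x)
        = Complex.exp (2 * ↑π * I * ((r:ℝ)/(N:ℝ) : ℝ) * ↑x)
          * Complex.exp (2 * ↑π * I * (2*(a:ℝ) : ℝ) * ↑x) := by
      rw [← Complex.exp_add]
      congr 1
      push_cast [hlam]
      ring
    rw [this]
    ring
  simp_rw [hptwise]
  rw [intervalIntegral.integral_sub (ii_one hN hfD _ hE hEb) (ii_two hN hfD _ hE hEb)]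
  rw [intervalIntegral.integral_neg] at H
  linear_combination H

lemma vanish (g : ℝ → ℂ) (hgm : StronglyMeasurable g)
    (hg : MemLp g 2 (volume.restrict (Set.Ioc (0:ℝ) (1/2))))
    (hcoef : ∀ a : ℤ, ∫ x in (0:ℝ)..(1/2), g x * Complex.exp (2*↑π*I*(2*(a:ℝ) : ℝ)*↑x) = 0) :
    g =ᵐ[volume.restrict (Set.Ioc (0:ℝ) (1/2))] 0 := by
  haveI hT : Fact ((0:ℝ) < 1/2) := ⟨by norm_num⟩
  set T : ℝ := 1/2 with hTdef
  set G : AddCircle T → ℂ := AddCircle.liftIoc T 0 g with hGdef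
  have hGmeas : StronglyMeasurable G := by
    have h1 : Measurable (fun x : AddCircle T => ((AddCircle.equivIoc T 0 x : ℝ))) :=
      measurable_subtype_coe.comp (AddCircle.measurableEquivIoc T 0).measurable
    exact hgm.comp_measurable h1
  have hzt : (0:ℝ) + T = 1/2 := by rw [hTdef]; ring
  have hgG : g =ᵐ[volume.restrict (Set.Ioc (0:ℝ) (1/2))] (fun x : ℝ => G (x : AddCircle T)) := by
    rw [← hzt]
    filter_upwards [ae_restrict_mem measurableSet_Ioc] with x hx
    rw [hGdef, AddCircle.liftIoc_coe_apply hx]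
  have hmp : MeasurePreserving ((↑) : ℝ → AddCircle T)
      (volume.restrict (Set.Ioc (0:ℝ) (1/2))) volume := by
    have := AddCircle.measurePreserving_mk T 0
    rwa [hzt] at this
  have hmemV : MemLp G 2 (volume : Measure (AddCircle T)) := by
    have h1 : MemLp (fun x : ℝ => G (x : AddCircle T)) 2 (volume.restrict (Set.Ioc (0:ℝ) (1/2))) :=
      hg.ae_eq hgG
    rw [← hmp.map_eq]
    exact (memLp_map_measure_iff hGmeas.aestronglyMeasurable
      hmp.measurable.aemeasurable).mpr h1
  have hmemH : MemLp G 2 (haarAddCircle : Measure (AddCircle T)) := by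
    have h2 := hmemV.smul_measure (c := (ENNReal.ofReal T)⁻¹) (by simp; exact hT.out)
    have : (ENNReal.ofReal T)⁻¹ • (volume : Measure (AddCircle T)) = haarAddCircle := by
      rw [AddCircle.volume_eq_smul_haarAddCircle, smul_smul, ENNReal.inv_mul_cancel
        (ENNReal.ofReal_pos.mpr hT.out).ne' ENNReal.ofReal_ne_top, one_smul]
    rwa [this] at h2
  have hcoefG : ∀ n : ℤ, fourierCoeff G n = 0 := by
    intro n
    rw [hGdef, fourierCoeff_liftIoc_eq, fourierCoeffOn_eq_integral]
    have harg : ∀ x : ℝ, (fourier (-n) (x : AddCircle (0 + T - 0)) : ℂ) • g x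
        = g x * Complex.exp (2*↑π*I*(2*((-n : ℤ):ℝ) : ℝ)*↑x) := by
      intro x
      rw [smul_eq_mul, mul_comm]
      congr 1
      rw [fourier_coe_apply]
      congr 1
      push_cast [hTdef]
      have h2 : ((1:ℂ)/2) ≠ 0 := by norm_num
      field_simp
      ring
    simp_rw [harg]
    rw [show (0:ℝ) + T = 1/2 from hzt]
    rw [hcoef (-n)]
    simp
  -- pass to Lp element
  set Glp := hmemH.toLp G with hGlp
  have hrepr : fourierBasis.repr Glp = 0 := by
    ext n
    rw [fourierBasis_repr]
    have : fourierCoeff (Glp : AddCircle T → ℂ) n = fourierCoeff G n := by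
      unfold fourierCoeff
      apply integral_congr_ae
      filter_upwards [hmemH.coeFn_toLp] with t ht
      rw [ht]
    rw [this, hcoefG]
    rfl
  have hGlp0 : Glp = 0 := by
    apply fourierBasis.repr.injective
    rw [hrepr, map_zero]
  have hGae : G =ᵐ[(haarAddCircle : Measure (AddCircle T))] 0 := by
    refine (hmemH.coeFn_toLp).symm.trans ?_
    rw [← hGlp, hGlp0]
    exact Lp.coeFn_zero _ _ _
  have hGaeV : G =ᵐ[(volume : Measure (AddCircle T))] 0 := by
    rw [AddCircle.volume_eq_smul_haarAddCircle]
    exact Measure.ae_smul_measure hGae _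
  have hcomp := hmp.quasiMeasurePreserving.ae_eq_comp hGaeV
  exact hgG.trans hcomp

lemma complete_aux (hN : 1 ≤ N) (hodd : Odd r) (hmeas : StronglyMeasurable f)
    (hf : MemLp f 2 (volume.restrict (Delta N)))
    (horth : ∀ lam ∈ Omega N r,
      ∫ ω in Delta N, f ω * conj (Complex.exp (-2 * π * I * lam * ω)) = 0) :
    f =ᵐ[volume.restrict (Delta N)] 0 := by
  have hN1 : (1:ℝ) ≤ (N:ℝ) := by exact_mod_cast hN
  have hIcoIoc1 : volume.restrict (Set.Ioc (0:ℝ) (1/2)) = volume.restrict (Set.Ico (0:ℝ) (1/2)) :=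
    (Measure.restrict_congr_set Ico_ae_eq_Ioc).symm
  have hIcoIoc2 : volume.restrict (Set.Ioc ((N:ℝ)/2) (((N:ℝ)+1)/2))
      = volume.restrict (Set.Ico ((N:ℝ)/2) (((N:ℝ)+1)/2)) :=
    (Measure.restrict_congr_set Ico_ae_eq_Ioc).symm
  -- measure-preserving shift
  have hpre : (fun x : ℝ => x + (N:ℝ)/2) ⁻¹' (Set.Ioc ((N:ℝ)/2) (((N:ℝ)+1)/2))
      = Set.Ioc (0:ℝ) (1/2) := by
    ext x
    simp only [Set.mem_preimage, Set.mem_Ioc]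
    constructor <;> intro h <;> constructor <;> linarith [h.1, h.2]
  have hmp : MeasurePreserving (fun x : ℝ => x + (N:ℝ)/2)
      (volume.restrict (Set.Ioc (0:ℝ) (1/2)))
      (volume.restrict (Set.Ioc ((N:ℝ)/2) (((N:ℝ)+1)/2))) := by
    have := (measurePreserving_add_right volume ((N:ℝ)/2)).restrict_preimage
      (s := Set.Ioc ((N:ℝ)/2) (((N:ℝ)+1)/2)) measurableSet_Ioc
    rwa [hpre] at this
  -- MemLp pieces
  have hf1 : MemLp f 2 (volume.restrict (Set.Ioc (0:ℝ) (1/2))) := by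
    rw [hIcoIoc1]
    exact hf.mono_measure (Measure.restrict_mono Set.subset_union_left le_rfl)
  have hfbig : MemLp f 2 (volume.restrict (Set.Ioc ((N:ℝ)/2) (((N:ℝ)+1)/2))) := by
    rw [hIcoIoc2]
    exact hf.mono_measure (Measure.restrict_mono Set.subset_union_right le_rfl)
  have hf2 : MemLp (fun x : ℝ => f (x + (N:ℝ)/2)) 2 (volume.restrict (Set.Ioc (0:ℝ) (1/2))) := by
    rw [← hmp.map_eq] at hfbig
    exact (memLp_map_measure_iff hmeas.aestronglyMeasurable
      hmp.measurable.aemeasurable).mp hfbig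
  have hmeas2 : StronglyMeasurable (fun x : ℝ => f (x + (N:ℝ)/2)) :=
    hmeas.comp_measurable (measurable_id.add_const _)
  -- g plus
  set gp : ℝ → ℂ := fun x => f x + f (x + (N:ℝ)/2) with hgp
  set gm : ℝ → ℂ := fun x =>
    Complex.exp (2 * ↑π * I * ((r:ℝ)/(N:ℝ) : ℝ) * ↑x) * (f x - f (x + (N:ℝ)/2)) with hgm
  have hgpm : StronglyMeasurable gp := hmeas.add hmeas2
  have hgmm : StronglyMeasurable gm := by
    apply StronglyMeasurable.mul _ (hmeas.sub hmeas2)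
    exact (Complex.continuous_exp.comp (by continuity)).stronglyMeasurable
  have hgpL : MemLp gp 2 (volume.restrict (Set.Ioc (0:ℝ) (1/2))) := hf1.add hf2
  have hgmL : MemLp gm 2 (volume.restrict (Set.Ioc (0:ℝ) (1/2))) := by
    apply MemLp.of_le (hf1.sub hf2) hgmm.aestronglyMeasurable
    apply ae_of_all
    intro x
    rw [hgm]
    simp only [norm_mul]
    rw [norm_exp_real_mul_I _ (2*π*((r:ℝ)/(N:ℝ))*x) (by push_cast; ring), one_mul]
    simp [Pi.sub_apply]
  -- vanish
  have hgp0 : gp =ᵐ[volume.restrict (Set.Ioc (0:ℝ) (1/2))] 0 :=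
    vanish gp hgpm hgpL (fun a => master_plus hN hf horth a)
  have hgm0 : gm =ᵐ[volume.restrict (Set.Ioc (0:ℝ) (1/2))] 0 :=
    vanish gm hgmm hgmL (fun a => master_minus hN hodd hf horth a)
  -- unravel
  have hdiff0 : (fun x : ℝ => f x - f (x + (N:ℝ)/2)) =ᵐ[volume.restrict (Set.Ioc (0:ℝ) (1/2))]
      0 := by
    filter_upwards [hgm0] with x hx
    simp only [hgm, Pi.zero_apply, mul_eq_zero] at hx
    rcases hx with hx | hx
    · exact absurd hx (Complex.exp_ne_zero _)
    · exact hx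
  have hsmall : f =ᵐ[volume.restrict (Set.Ioc (0:ℝ) (1/2))] 0 := by
    filter_upwards [hgp0, hdiff0] with x h1 h2
    simp only [hgp, Pi.zero_apply] at h1 h2 ⊢
    linear_combination h1/2 + h2/2
  have hshift0 : (fun x : ℝ => f (x + (N:ℝ)/2)) =ᵐ[volume.restrict (Set.Ioc (0:ℝ) (1/2))] 0 := by
    filter_upwards [hgp0, hdiff0] with x h1 h2
    simp only [hgp, Pi.zero_apply] at h1 h2 ⊢
    linear_combination h1/2 - h2/2
  have hbig : f =ᵐ[volume.restrict (Set.Ioc ((N:ℝ)/2) (((N:ℝ)+1)/2))] 0 := by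
    rw [← hmp.map_eq]
    have hms : MeasurableSet {y : ℝ | f y = 0} := hmeas.measurable (measurableSet_singleton 0)
    have : ∀ᵐ y ∂(Measure.map (fun x : ℝ => x + (N:ℝ)/2)
        (volume.restrict (Set.Ioc (0:ℝ) (1/2)))), f y = 0 := by
      rw [MeasureTheory.ae_map_iff hmp.measurable.aemeasurable hms]
      filter_upwards [hshift0] with x hx
      exact hx
    filter_upwards [this] with x hx
    exact hx
  have h1 : ∀ᵐ x ∂volume.restrict (Set.Ico (0:ℝ) (1/2)), f x = 0 := by
    rw [← hIcoIoc1]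
    filter_upwards [hsmall] with x hx; exact hx
  have h2 : ∀ᵐ x ∂volume.restrict (Set.Ico ((N:ℝ)/2) (((N:ℝ)+1)/2)), f x = 0 := by
    rw [← hIcoIoc2]
    filter_upwards [hbig] with x hx; exact hx
  have := (ae_restrict_union_iff (Set.Ico (0:ℝ) (1/2))
    (Set.Ico ((N:ℝ)/2) (((N:ℝ)+1)/2)) (fun x => f x = 0)).mpr ⟨h1, h2⟩
  rw [show Set.Ico (0:ℝ) (1/2) ∪ Set.Ico ((N:ℝ)/2) (((N:ℝ)+1)/2) = Delta N from rfl] at this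
  filter_upwards [this] with x hx
  exact hx

end Helpers

/-- (Ω, Δ) is a spectral pair: the exponentials e^{-2πiλω}, λ ∈ Ω, form an
orthonormal basis of L²(Δ): they are orthonormal, and any f ∈ L²(Δ) orthogonal
to all of them vanishes a.e. on Δ. -/
theorem omega_delta_spectral_pair (N : ℕ) (r : ℤ) (hN : 1 ≤ N) (hodd : Odd r)
    (hr1 : 1 ≤ r) (hr2 : r ≤ 2 * (N : ℤ) - 1) (hcop : Int.gcd r (N : ℤ) = 1) :
    (∀ lam ∈ Omega N r, ∀ sig ∈ Omega N r,
        ∫ ω in Delta N,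
          Complex.exp (-2 * π * I * lam * ω) * conj (Complex.exp (-2 * π * I * sig * ω))
          = if lam = sig then 1 else 0) ∧
    (∀ f : ℝ → ℂ, MemLp f 2 (volume.restrict (Delta N)) →
        (∀ lam ∈ Omega N r,
          ∫ ω in Delta N, f ω * conj (Complex.exp (-2 * π * I * lam * ω)) = 0) →
        f =ᵐ[volume.restrict (Delta N)] 0) := by
  constructor
  · exact ortho N r hN hodd
  · intro f hf horth
    set φ : ℝ → ℂ := hf.1.mk f with hφ
    have hφm : StronglyMeasurable φ := hf.1.stronglyMeasurable_mk
    have hfφ : f =ᵐ[volume.restrict (Delta N)] φ := hf.1.ae_eq_mk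
    have hφL : MemLp φ 2 (volume.restrict (Delta N)) := hf.ae_eq hfφ
    have hφorth : ∀ lam ∈ Omega N r,
        ∫ ω in Delta N, φ ω * conj (Complex.exp (-2 * π * I * lam * ω)) = 0 := by
      intro lam hl
      rw [← horth lam hl]
      apply integral_congr_ae
      filter_upwards [hfφ] with x hx
      rw [hx]
    exact hfφ.trans (complete_aux hN hodd hφm hφL hφorth)

end
end

section
/- Suppose m₀ is as in the refinement equation, m₀(0) = 1, m₀ is continuous at 0, and the associated function 𝕄₀(ξ) = |m₀¹(ξ)|² + |m₀²(ξ)|² satisfies the two filter identities Σ_{p=0}^{2N−1} 𝕄₀(ξ + p/(4N)) = 1 and Σ_{p=0}^{2N−1} e^{−iπrp/N} 𝕄₀(ξ + p/(4N)) = 0 for a.e. ξ. If the infinite product ϕ̂(ξ) = ∏_{j=1}^∞ m₀(ξ/(2N)^j) converges almost everywhere on ℝ, then the resulting function ϕ̂ belongs to L²(ℝ) with ‖ϕ̂‖² ≤ 1. -/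
open MeasureTheory Complex Real ComplexConjugate Filter

noncomputable section

lemma ae_affine {P : ℝ → Prop} (h : ∀ᵐ x : ℝ, P x) {c : ℝ} (hc : c ≠ 0) (d : ℝ) :
    ∀ᵐ x : ℝ, P (c * x + d) := by
  have h1 : Measure.QuasiMeasurePreserving (fun x : ℝ => c * x) volume volume :=
    ⟨(measurable_const_mul c), by
      rw [Real.map_volume_mul_left hc]
      exact MeasureTheory.Measure.smul_absolutelyContinuous⟩
  have h2 : Measure.QuasiMeasurePreserving (fun x : ℝ => x + d) volume volume :=
    (measurePreserving_add_right volume d).quasiMeasurePreserving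
  exact h1.ae (h2.ae h)

lemma aesm_affine {E : Type*} [TopologicalSpace E] [TopologicalSpace.PseudoMetrizableSpace E] {f : ℝ → E}
    (hf : AEStronglyMeasurable f (volume : Measure ℝ)) {c : ℝ} (hc : c ≠ 0) (d : ℝ) :
    AEStronglyMeasurable (fun x => f (c * x + d)) (volume : Measure ℝ) := by
  have h₂ : Measurable fun x : ℝ => c * x + d := (measurable_id.const_mul c).add_const d
  refine ((hf.stronglyMeasurable_mk.comp_measurable h₂).aestronglyMeasurable).congr ?_
  filter_upwards [ae_affine hf.ae_eq_mk hc d] with x hx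
  exact hx.symm

lemma intervalIntegrable_of_bdd {f : ℝ → ℝ} (hf : AEStronglyMeasurable f (volume : Measure ℝ))
    {C : ℝ} (hC : ∀ᵐ x : ℝ, |f x| ≤ C) (a b : ℝ) : IntervalIntegrable f volume a b := by
  rw [intervalIntegrable_iff]
  refine Integrable.mono' (integrableOn_const (C := C) ?_) hf.restrict
    (ae_restrict_of_ae (hC.mono fun x hx => by simpa using hx))
  exact measure_Ioc_lt_top.ne

/-- If the low-pass filter m₀ satisfies the nonuniform filter identities and the
infinite product ∏_{j≥1} m₀(ξ/(2N)^j) converges a.e. to ϕ̂, then ϕ̂ ∈ L²(ℝ) with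
‖ϕ̂‖² ≤ 1. -/
theorem infinite_product_memL2 (N : ℕ) (r : ℤ) (hN : 1 ≤ N) (hodd : Odd r)
    (hr1 : 1 ≤ r) (hr2 : r ≤ 2 * (N : ℤ) - 1) (hcop : Int.gcd r (N : ℤ) = 1)
    (m01 m02 : ℝ → ℂ)
    (hper1 : Function.Periodic m01 (1 / 2)) (hper2 : Function.Periodic m02 (1 / 2))
    (hsm1 : AEStronglyMeasurable m01 (volume : Measure ℝ))
    (hsm2 : AEStronglyMeasurable m02 (volume : Measure ℝ))
    (m0 : ℝ → ℂ)
    (hm0 : ∀ ξ : ℝ, m0 ξ = m01 ξ + Complex.exp (-2 * π * I * ξ * r / N) * m02 ξ)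
    (hm00 : m0 0 = 1) (hcont : ContinuousAt m0 0)
    (M0 : ℝ → ℝ) (hM0 : ∀ ξ : ℝ, M0 ξ = ‖m01 ξ‖ ^ 2 + ‖m02 ξ‖ ^ 2)
    (hid1 : ∀ᵐ ξ : ℝ, (∑ p ∈ Finset.range (2 * N), M0 (ξ + (p : ℝ) / (4 * N))) = 1)
    (hid2 : ∀ᵐ ξ : ℝ, (∑ p ∈ Finset.range (2 * N),
        Complex.exp (-π * I * r * p / N) * (M0 (ξ + (p : ℝ) / (4 * N)) : ℂ)) = 0)
    (φhat : ℝ → ℂ) (hφm : AEStronglyMeasurable φhat (volume : Measure ℝ))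
    (hprod : ∀ᵐ ξ : ℝ, Tendsto
        (fun n : ℕ => ∏ j ∈ Finset.range n, m0 (ξ / ((2 * N : ℝ)) ^ (j + 1)))
        atTop (nhds (φhat ξ))) :
    MemLp φhat 2 (volume : Measure ℝ) ∧ (∫ ξ : ℝ, ‖φhat ξ‖ ^ 2) ≤ 1 := by
  have hNR : (1:ℝ) ≤ N := by exact_mod_cast hN
  set a : ℝ := 2 * (N:ℝ) with ha_def
  have ha2 : (2:ℝ) ≤ a := by rw [ha_def]; nlinarith
  have ha0 : (0:ℝ) < a := by linarith
  have ha1 : (1:ℝ) < a := by linarith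
  have hane : a ≠ 0 := ne_of_gt ha0
  have hapow : ∀ k : ℕ, (0:ℝ) < a ^ k := fun k => pow_pos ha0 k
  set Q : ℝ → ℝ := fun ξ => ‖m0 ξ‖ ^ 2 with hQ_def
  set P : ℕ → ℝ → ℝ := fun n ξ => ∏ k ∈ Finset.range (n + 1), Q (ξ / a ^ (k + 1)) with hP_def
  -- measurability of Q and its dilates
  have hm0meas : AEStronglyMeasurable m0 (volume : Measure ℝ) := by
    have : AEStronglyMeasurable (fun ξ : ℝ => m01 ξ + Complex.exp (-2 * π * I * ξ * r / N) * m02 ξ)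
        (volume : Measure ℝ) := by
      refine hsm1.add (AEStronglyMeasurable.mul ?_ hsm2)
      refine Continuous.aestronglyMeasurable ?_
      fun_prop
    exact this.congr (.of_forall fun ξ => (hm0 ξ).symm)
  have hQmeas : AEStronglyMeasurable Q (volume : Measure ℝ) := (hm0meas.norm.pow 2)
  have hQdil : ∀ c : ℝ, c ≠ 0 → AEStronglyMeasurable (fun ξ : ℝ => Q (ξ / c))
      (volume : Measure ℝ) := by
    intro c hc
    have := aesm_affine hQmeas (c := c⁻¹) (inv_ne_zero hc) 0
    refine this.congr (.of_forall fun x => ?_)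
    show Q (c⁻¹ * x + 0) = Q (x / c)
    rw [add_zero, inv_mul_eq_div]
  have hPmeas : ∀ n, AEStronglyMeasurable (P n) (volume : Measure ℝ) := by
    intro n
    rw [hP_def]
    have : ∀ k ∈ Finset.range (n+1), AEMeasurable (fun ξ : ℝ => Q (ξ / a ^ (k+1))) volume :=
      fun k _ => (hQdil _ (ne_of_gt (hapow (k+1)))).aemeasurable
    exact (Finset.aemeasurable_fun_prod _ this).aestronglyMeasurable
  have hNne : (N:ℝ) ≠ 0 := by positivity
  have hM0nonneg : ∀ ξ, 0 ≤ M0 ξ := fun ξ => by rw [hM0]; positivity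
  have hM01 : ∀ᵐ ξ : ℝ, M0 ξ ≤ 1 := by
    filter_upwards [hid1] with ξ h
    have h0 : ∀ p ∈ Finset.range (2*N), 0 ≤ M0 (ξ + (p:ℝ)/(4*N)) := fun p _ => hM0nonneg _
    have hmem : 0 ∈ Finset.range (2*N) := by
      simp only [Finset.mem_range]; omega
    have hs := Finset.single_le_sum h0 hmem
    rw [h] at hs
    simpa using hs
  have hM0meas : AEStronglyMeasurable M0 (volume : Measure ℝ) := by
    have : AEStronglyMeasurable (fun ξ : ℝ => ‖m01 ξ‖^2 + ‖m02 ξ‖^2) volume :=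
      (hsm1.norm.pow 2).add (hsm2.norm.pow 2)
    exact this.congr (.of_forall fun ξ => (hM0 ξ).symm)
  -- norms of unit exponentials
  have hexp1 : ∀ x : ℝ, ‖Complex.exp ((x:ℂ) * I)‖ = 1 := fun x =>
    Complex.norm_exp_ofReal_mul_I x
  have hexpE : ∀ ξ : ℝ, ‖Complex.exp (-2 * π * I * ξ * r / N)‖ = 1 := by
    intro ξ
    rw [show (-2 * (π:ℂ) * I * ξ * r / N) = ((-2*π*ξ*r/N : ℝ):ℂ) * I by push_cast; ring]
    exact hexp1 _
  have hexpEp : ∀ p : ℕ, ‖Complex.exp (-π * I * r * p / N)‖ = 1 := by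
    intro p
    rw [show (-(π:ℂ) * I * r * p / N) = ((-π*r*p/N : ℝ):ℂ) * I by push_cast; ring]
    exact hexp1 _
  -- bound on m0 by M0
  have hm0norm : ∀ ξ, ‖m0 ξ‖ ≤ ‖m01 ξ‖ + ‖m02 ξ‖ := by
    intro ξ
    rw [hm0]
    refine le_trans (norm_add_le _ _) ?_
    gcongr
    rw [norm_mul, show ‖Complex.exp (-2 * π * I * ξ * r / N)‖ = 1 from hexpE ξ, one_mul]
  have hQ2M : ∀ ξ, Q ξ ≤ 2 * M0 ξ := by
    intro ξ
    have h1 := hm0norm ξ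
    have h2 : (0:ℝ) ≤ ‖m0 ξ‖ := norm_nonneg _
    have h3 : (0:ℝ) ≤ ‖m01 ξ‖ := norm_nonneg _
    have h4 : (0:ℝ) ≤ ‖m02 ξ‖ := norm_nonneg _
    simp only [hQ_def, hM0]
    have h5 : ‖m0 ξ‖^2 ≤ (‖m01 ξ‖ + ‖m02 ξ‖)^2 := by nlinarith
    nlinarith [sq_nonneg (‖m01 ξ‖ - ‖m02 ξ‖)]
  have hQ4 : ∀ᵐ ξ : ℝ, Q ξ ≤ 4 := by
    filter_upwards [hM01] with ξ h
    have := hQ2M ξ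
    linarith [hM0nonneg ξ]
  have hQnonneg' : ∀ ξ, 0 ≤ Q ξ := fun ξ => by simp only [hQ_def]; positivity
  -- periodicity
  have hM0per : Function.Periodic M0 (1/2) := by
    intro x
    rw [hM0, hM0, hper1 x, hper2 x]
  have hm0N : Function.Periodic m0 (N:ℝ) := by
    intro x
    rw [hm0 (x + N), hm0 x]
    have h1 : m01 (x + (N:ℝ)) = m01 x := by
      have := (hper1.nat_mul (2*N)) x
      rwa [show ((2*N : ℕ):ℝ) * (1/2) = (N:ℝ) by push_cast; ring] at this
    have h2 : m02 (x + (N:ℝ)) = m02 x := by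
      have := (hper2.nat_mul (2*N)) x
      rwa [show ((2*N : ℕ):ℝ) * (1/2) = (N:ℝ) by push_cast; ring] at this
    rw [h1, h2]
    congr 2
    have hNC : (N:ℂ) ≠ 0 := by exact_mod_cast hNne
    rw [show (-2 * (π:ℂ) * I * ((x:ℝ) + (N:ℝ) : ℝ) * r / N)
        = -2 * (π:ℂ) * I * (x:ℝ) * r / N + ((-r : ℤ):ℂ) * (2 * π * I) by
      push_cast; field_simp; ring]
    rw [Complex.exp_add, Complex.exp_int_mul_two_pi_mul_I, mul_one]
  have hQperN : Function.Periodic Q (N:ℝ) := fun x => by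
    simp only [hQ_def]; rw [hm0N x]
  have hQnatN : ∀ (k : ℕ) (x : ℝ), Q (x + (k:ℝ) * (N:ℝ)) = Q x := fun k x =>
    (hQperN.nat_mul k) x
  have hQbigdil : ∀ (m : ℕ), 1 ≤ m → ∀ x : ℝ, Q (a^m * (x + 1/2)) = Q (a^m * x) := by
    intro m hm x
    obtain ⟨m', rfl⟩ : ∃ m', m = m' + 1 := ⟨m-1, by omega⟩
    have h1 : a^(m'+1) * (x + 1/2) = a^(m'+1) * x + (((2*N)^m' : ℕ):ℝ) * (N:ℝ) := by
      push_cast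
      rw [ha_def]
      ring
    rw [h1, hQnatN]
  -- half-shift expansion of Q
  have hQhalf : ∀ (x : ℝ) (p : ℕ), Q (x + (p:ℝ) * (1/2)) = M0 x +
      2 * (Complex.exp (-π * I * r * p / N) *
        (Complex.exp (-2 * π * I * x * r / N) * (m02 x * (starRingEnd ℂ) (m01 x)))).re := by
    intro x p
    have h01 : m01 (x + (p:ℝ) * (1/2)) = m01 x := (hper1.nat_mul p) x
    have h02 : m02 (x + (p:ℝ) * (1/2)) = m02 x := (hper2.nat_mul p) x
    have hNC : (N:ℂ) ≠ 0 := by exact_mod_cast hNne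
    have hexpsplit : Complex.exp (-2 * π * I * ((x + (p:ℝ) * (1/2) : ℝ):ℂ) * r / N)
        = Complex.exp (-π * I * r * p / N) * Complex.exp (-2 * π * I * x * r / N) := by
      rw [← Complex.exp_add]
      congr 1
      push_cast
      field_simp
      ring
    have hm0x : m0 (x + (p:ℝ) * (1/2)) = Complex.exp (-π * I * r * p / N) *
        Complex.exp (-2 * π * I * x * r / N) * m02 x + m01 x := by
      rw [hm0, h01, h02, hexpsplit]
      ring
    simp only [hQ_def]
    rw [hm0x, hM0]
    rw [Complex.sq_norm, Complex.normSq_add]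
    have habs : Complex.normSq (Complex.exp (-π * I * r * p / N) *
        Complex.exp (-2 * π * I * x * r / N) * m02 x) = Complex.normSq (m02 x) := by
      rw [Complex.normSq_mul, Complex.normSq_mul]
      rw [Complex.normSq_eq_norm_sq, Complex.normSq_eq_norm_sq, hexpEp, hexpE]
      norm_num
    rw [habs]
    rw [Complex.normSq_eq_norm_sq, Complex.normSq_eq_norm_sq]
    rw [show Complex.exp (-π * I * r * p / N) * Complex.exp (-2 * π * I * x * r / N) * m02 x *
        (starRingEnd ℂ) (m01 x) = Complex.exp (-π * I * r * p / N) *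
        (Complex.exp (-2 * π * I * x * r / N) * (m02 x * (starRingEnd ℂ) (m01 x))) by ring]
    ring
  -- the key averaged identity
  have hre : ∀ (z : ℂ) (t : ℝ), z.re * t = (z * (t:ℂ)).re := fun z t => by
    simp [Complex.mul_re]
  have hkey : ∀ᵐ ξ : ℝ, (∑ p ∈ Finset.range (2*N),
      Q (ξ + (p:ℝ) * (1/2)) * M0 ((ξ + (p:ℝ) * (1/2))/a)) = M0 ξ := by
    have h1 := ae_affine hid1 (c := a⁻¹) (inv_ne_zero hane) 0
    have h2 := ae_affine hid2 (c := a⁻¹) (inv_ne_zero hane) 0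
    filter_upwards [h1, h2] with ξ k1 k2
    simp only [add_zero, inv_mul_eq_div] at k1 k2
    have harg : ∀ p : ℕ, (ξ + (p:ℝ) * (1/2))/a = ξ/a + (p:ℝ)/(4*N) := by
      intro p
      rw [ha_def]
      field_simp
      ring
    set w : ℂ := Complex.exp (-2 * π * I * ξ * r / N) * (m02 ξ * (starRingEnd ℂ) (m01 ξ))
      with hw_def
    have hterm : ∀ p ∈ Finset.range (2*N), Q (ξ + (p:ℝ) * (1/2)) * M0 ((ξ + (p:ℝ) * (1/2))/a)
        = M0 ξ * M0 (ξ/a + (p:ℝ)/(4*N)) +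
          2 * ((Complex.exp (-π * I * r * p / N) * ((M0 (ξ/a + (p:ℝ)/(4*N)) : ℝ) : ℂ)) * w).re := by
      intro p _
      rw [hQhalf ξ p, harg p]
      have e1 : (Complex.exp (-π * I * r * p / N) * w).re * M0 (ξ/a + (p:ℝ)/(4*N))
          = ((Complex.exp (-π * I * r * p / N) * ((M0 (ξ/a + (p:ℝ)/(4*N)) : ℝ) : ℂ)) * w).re := by
        rw [hre]
        congr 1
        ring
      calc (M0 ξ + 2 * (Complex.exp (-π * I * r * p / N) * w).re) * M0 (ξ/a + (p:ℝ)/(4*N))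
          = M0 ξ * M0 (ξ/a + (p:ℝ)/(4*N)) +
            2 * ((Complex.exp (-π * I * r * p / N) * w).re * M0 (ξ/a + (p:ℝ)/(4*N))) := by ring
        _ = _ := by rw [e1]
    rw [Finset.sum_congr rfl hterm, Finset.sum_add_distrib, ← Finset.mul_sum, k1, mul_one]
    have hz : (∑ p ∈ Finset.range (2*N),
        2 * ((Complex.exp (-π * I * r * p / N) * ((M0 (ξ/a + (p:ℝ)/(4*N)) : ℝ) : ℂ)) * w).re) = 0 := by
      rw [← Finset.mul_sum, ← Complex.re_sum, ← Finset.sum_mul, k2, zero_mul]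
      simp
    rw [hz, add_zero]
  -- translation and dilation helpers
  have htrans : ∀ (f : ℝ → ℝ), AEStronglyMeasurable f (volume : Measure ℝ) → ∀ (d : ℝ),
      AEStronglyMeasurable (fun x : ℝ => f (x + d)) (volume : Measure ℝ) := by
    intro f hf d
    refine (aesm_affine hf one_ne_zero d).congr (.of_forall fun x => ?_)
    show f (1 * x + d) = f (x + d)
    rw [one_mul]
  have htransb : ∀ (f : ℝ → ℝ) (C : ℝ), (∀ᵐ x : ℝ, |f x| ≤ C) → ∀ (d : ℝ),
      ∀ᵐ x : ℝ, |f (x + d)| ≤ C := by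
    intro f C hC d
    filter_upwards [ae_affine hC one_ne_zero d] with x hx
    rwa [one_mul] at hx
  have hQmul : ∀ c : ℝ, c ≠ 0 → AEStronglyMeasurable (fun ξ : ℝ => Q (c * ξ))
      (volume : Measure ℝ) := by
    intro c hc
    refine (aesm_affine hQmeas hc 0).congr (.of_forall fun x => ?_)
    show Q (c * x + 0) = Q (c * x)
    rw [add_zero]
  have hQ4abs : ∀ᵐ ξ : ℝ, |Q ξ| ≤ 4 := by
    filter_upwards [hQ4] with ξ h
    rw [_root_.abs_of_nonneg (hQnonneg' ξ)]; exact h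
  have hQmulb : ∀ c : ℝ, c ≠ 0 → ∀ᵐ ξ : ℝ, |Q (c * ξ)| ≤ 4 := by
    intro c hc
    filter_upwards [ae_affine hQ4abs hc 0] with x hx
    rwa [add_zero] at hx
  have hQdivb : ∀ c : ℝ, c ≠ 0 → ∀ᵐ ξ : ℝ, |Q (ξ / c)| ≤ 4 := by
    intro c hc
    filter_upwards [ae_affine hQ4abs (inv_ne_zero hc) 0] with x hx
    rwa [add_zero, inv_mul_eq_div] at hx
  have hM0div : ∀ c : ℝ, c ≠ 0 → AEStronglyMeasurable (fun ξ : ℝ => M0 (ξ / c))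
      (volume : Measure ℝ) := by
    intro c hc
    refine (aesm_affine hM0meas (inv_ne_zero hc) 0).congr (.of_forall fun x => ?_)
    show M0 (c⁻¹ * x + 0) = M0 (x / c)
    rw [add_zero, inv_mul_eq_div]
  have hM01abs : ∀ᵐ ξ : ℝ, |M0 ξ| ≤ 1 := by
    filter_upwards [hM01] with ξ h
    rw [_root_.abs_of_nonneg (hM0nonneg ξ)]; exact h
  have hM0divb : ∀ c : ℝ, c ≠ 0 → ∀ᵐ ξ : ℝ, |M0 (ξ / c)| ≤ 1 := by
    intro c hc
    filter_upwards [ae_affine hM01abs (inv_ne_zero hc) 0] with x hx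
    rwa [add_zero, inv_mul_eq_div] at hx
  have hQdiv_all : ∀ᵐ ξ : ℝ, ∀ k : ℕ, |Q (ξ / a^(k+1))| ≤ 4 :=
    ae_all_iff.2 fun k => hQdivb _ (ne_of_gt (hapow (k+1)))
  have hQmul_all : ∀ᵐ ξ : ℝ, ∀ k : ℕ, |Q (a^k * ξ)| ≤ 4 :=
    ae_all_iff.2 fun k => hQmulb _ (ne_of_gt (hapow k))
  -- product bounds
  have hprodbdd : ∀ (m : ℕ) (g : ℕ → ℝ), (∀ k, 0 ≤ g k) → (∀ k, |g k| ≤ 4) →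
      |∏ k ∈ Finset.range m, g k| ≤ 4 ^ m := by
    intro m g h0 h4
    rw [_root_.abs_of_nonneg (Finset.prod_nonneg fun k _ => h0 k)]
    calc (∏ k ∈ Finset.range m, g k) ≤ ∏ k ∈ Finset.range m, (4:ℝ) := by
          refine Finset.prod_le_prod (fun k _ => h0 k) (fun k _ => ?_)
          exact (abs_le.1 (h4 k)).2
      _ = 4 ^ m := by rw [Finset.prod_const, Finset.card_range]
  -- the R-integrand
  have hFmeas : ∀ n : ℕ, AEStronglyMeasurable
      (fun ξ : ℝ => M0 (ξ/a^(n+1)) * ∏ k ∈ Finset.range n, Q (ξ/a^(k+1)))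
      (volume : Measure ℝ) := by
    intro n
    refine (hM0div _ (ne_of_gt (hapow (n+1)))).mul ?_
    exact (Finset.aemeasurable_fun_prod _ fun k _ =>
      (hQdil _ (ne_of_gt (hapow (k+1)))).aemeasurable).aestronglyMeasurable
  have hFbdd : ∀ n : ℕ, ∀ᵐ ξ : ℝ,
      |M0 (ξ/a^(n+1)) * ∏ k ∈ Finset.range n, Q (ξ/a^(k+1))| ≤ 4 ^ n := by
    intro n
    filter_upwards [hM0divb _ (ne_of_gt (hapow (n+1))), hQdiv_all] with ξ h1 h2
    rw [abs_mul]
    calc |M0 (ξ/a^(n+1))| * |∏ k ∈ Finset.range n, Q (ξ/a^(k+1))|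
        ≤ 1 * (4:ℝ)^n := by
          refine mul_le_mul h1 ?_ (abs_nonneg _) (by norm_num)
          exact hprodbdd n _ (fun k => hQnonneg' _) (fun k => h2 k)
      _ = 4^n := one_mul _
  have hFint : ∀ (n : ℕ) (u v : ℝ), IntervalIntegrable
      (fun ξ : ℝ => M0 (ξ/a^(n+1)) * ∏ k ∈ Finset.range n, Q (ξ/a^(k+1))) volume u v :=
    fun n u v => intervalIntegrable_of_bdd (hFmeas n) (hFbdd n) u v
  -- integral of M0 over a period-sized window
  have hM0int : ∀ (d : ℝ) (u v : ℝ),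
      IntervalIntegrable (fun x : ℝ => M0 (x + d)) volume u v :=
    fun d u v => intervalIntegrable_of_bdd (htrans M0 hM0meas d) (htransb M0 1 hM01abs d) u v
  have hM0int' : ∀ u v : ℝ, IntervalIntegrable M0 volume u v :=
    fun u v => intervalIntegrable_of_bdd hM0meas hM01abs u v
  have hhalfM0 : (∫ x in (-(1/4) : ℝ)..(1/4 : ℝ), M0 x) = 1/(4*(N:ℝ)) := by
    have hpieces : ∀ p : ℕ,
        (∫ x in (-(1/4) + ((p:ℕ):ℝ)/(4*(N:ℝ)))..(-(1/4) + (((p+1):ℕ):ℝ)/(4*(N:ℝ))), M0 x)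
        = ∫ x in (-(1/4):ℝ)..(-(1/4)+1/(4*(N:ℝ))), M0 (x + (p:ℝ)/(4*(N:ℝ))) := by
      intro p
      rw [intervalIntegral.integral_comp_add_right]
      congr 1 <;> push_cast <;> ring
    have hsum := intervalIntegral.sum_integral_adjacent_intervals
      (f := M0) (μ := volume) (a := fun p : ℕ => -(1/4) + ((p:ℕ):ℝ)/(4*(N:ℝ))) (n := 2*N)
      (fun k _ => hM0int' _ _)
    have he0 : -(1/4) + (((0:ℕ)):ℝ)/(4*(N:ℝ)) = (-(1/4) : ℝ) := by norm_num
    have he1 : -(1/4) + (((2*N:ℕ)):ℝ)/(4*(N:ℝ)) = (1/4 : ℝ) := by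
      push_cast; field_simp; ring
    rw [he0, he1] at hsum
    rw [← hsum]
    have hstep2 : (∑ p ∈ Finset.range (2*N),
        ∫ x in (-(1/4) + ((p:ℕ):ℝ)/(4*(N:ℝ)))..(-(1/4) + (((p+1):ℕ):ℝ)/(4*(N:ℝ))), M0 x)
        = ∫ x in (-(1/4):ℝ)..(-(1/4)+1/(4*(N:ℝ))),
            (∑ p ∈ Finset.range (2*N), M0 (x + (p:ℝ)/(4*(N:ℝ)))) := by
      rw [intervalIntegral.integral_finset_sum (fun p _ => hM0int _ _ _)]
      exact Finset.sum_congr rfl fun p _ => hpieces p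
    rw [hstep2]
    have hone : (∫ x in (-(1/4):ℝ)..(-(1/4)+1/(4*(N:ℝ))),
        (∑ p ∈ Finset.range (2*N), M0 (x + (p:ℝ)/(4*(N:ℝ)))))
        = ∫ x in (-(1/4):ℝ)..(-(1/4)+1/(4*(N:ℝ))), (1:ℝ) := by
      refine intervalIntegral.integral_congr_ae ?_
      filter_upwards [hid1] with x hx _
      exact hx
    rw [hone, intervalIntegral.integral_const, smul_eq_mul, mul_one]
    ring
  -- the telescoping identity
  have hRR : ∀ n : ℕ, (∫ ξ in (-(a^(n+1)/4))..(a^(n+1)/4),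
      M0 (ξ/a^(n+1)) * ∏ k ∈ Finset.range n, Q (ξ/a^(k+1))) = 1/2 := by
    intro n
    induction n with
    | zero =>
      simp only [zero_add, pow_one, Finset.range_zero, Finset.prod_empty, mul_one]
      rw [intervalIntegral.integral_comp_div (f := M0) hane]
      have hq : (a/4)/a = (1/4:ℝ) := by
        rw [div_div, mul_comm, ← div_div, div_self hane]
      rw [show -(a/4)/a = (-(1/4) : ℝ) by rw [neg_div, hq], hq]
      rw [hhalfM0, smul_eq_mul, ha_def]
      rw [show (2*(N:ℝ)) * (1/(4*(N:ℝ))) = (2*(N:ℝ))/(4*(N:ℝ)) by ring]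
      rw [div_eq_div_iff (by positivity) (by norm_num : (2:ℝ) ≠ 0)]
      ring
    | succ n ih =>
      set G : ℝ → ℝ := fun η => ∏ k ∈ Finset.range n, Q (a^(n-k) * η) with hG_def
      set f : ℝ → ℝ := fun η => M0 (η/a) * (G η * Q η) with hf_def
      have hGmeas : AEStronglyMeasurable G (volume : Measure ℝ) := by
        rw [hG_def]
        exact (Finset.aemeasurable_fun_prod _ fun k _ =>
          (hQmul _ (ne_of_gt (hapow (n-k)))).aemeasurable).aestronglyMeasurable
      have hGbdd : ∀ᵐ η : ℝ, |G η| ≤ 4 ^ n := by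
        filter_upwards [ae_all_iff.2 fun k : ℕ => hQmulb (a^(n-k)) (ne_of_gt (hapow (n-k)))]
          with η h
        exact hprodbdd n _ (fun k => hQnonneg' _) (fun k => h k)
      have hGper : Function.Periodic G (1/2) := by
        intro x
        refine Finset.prod_congr rfl fun k hk => ?_
        exact hQbigdil (n-k) (by have := Finset.mem_range.1 hk; omega) x
      have hGnat : ∀ (p : ℕ) (x : ℝ), G (x + (p:ℝ)*(1/2)) = G x := fun p x =>
        (hGper.nat_mul p) x
      have hfmeas : AEStronglyMeasurable f (volume : Measure ℝ) := by
        rw [hf_def]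
        exact (hM0div a hane).mul (hGmeas.mul hQmeas)
      have hfbdd : ∀ᵐ η : ℝ, |f η| ≤ 4 ^ (n+1) := by
        filter_upwards [hM0divb a hane, hGbdd, hQ4abs] with η h1 h2 h3
        have : |f η| = |M0 (η/a)| * (|G η| * |Q η|) := by
          rw [hf_def]; simp only [abs_mul]
        rw [this]
        calc |M0 (η/a)| * (|G η| * |Q η|) ≤ 1 * (4^n * 4) := by
              refine mul_le_mul h1 ?_ (by positivity) (by norm_num)
              refine mul_le_mul h2 h3 (abs_nonneg _) (by positivity)
          _ = 4 ^ (n+1) := by ring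
      have hfint : ∀ u v : ℝ, IntervalIntegrable f volume u v :=
        fun u v => intervalIntegrable_of_bdd hfmeas hfbdd u v
      have hftint : ∀ (d : ℝ) (u v : ℝ), IntervalIntegrable (fun x => f (x + d)) volume u v :=
        fun d u v => intervalIntegrable_of_bdd (htrans f hfmeas d) (htransb f _ hfbdd d) u v
      -- Step A : pointwise identification after scaling
      have hA : ∀ η : ℝ, M0 ((a^(n+1) * η)/a^(n+1+1)) *
          ∏ k ∈ Finset.range (n+1), Q ((a^(n+1)*η)/a^(k+1)) = f η := by
        intro η
        have e1 : (a^(n+1)*η)/a^(n+1+1) = η/a := by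
          rw [div_eq_div_iff (ne_of_gt (hapow (n+1+1))) hane, pow_succ a (n+1)]
          ring
        have e2 : (∏ k ∈ Finset.range (n+1), Q ((a^(n+1)*η)/a^(k+1))) = G η * Q η := by
          rw [Finset.prod_range_succ]
          congr 1
          · refine Finset.prod_congr rfl fun k hk => ?_
            have hk' : k < n := Finset.mem_range.1 hk
            congr 1
            rw [show a^(n+1) = a^(k+1) * a^(n-k) by rw [← pow_add]; congr 1; omega]
            rw [mul_assoc, mul_div_cancel_left₀ _ (ne_of_gt (hapow (k+1)))]
          · congr 1
            rw [mul_comm, mul_div_assoc, div_self (ne_of_gt (hapow (n+1))), mul_one]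
        rw [e1, e2, hf_def]
      -- Step B : scaling
      have hB : (∫ ξ in (-(a^(n+1+1)/4))..(a^(n+1+1)/4),
          M0 (ξ/a^(n+1+1)) * ∏ k ∈ Finset.range (n+1), Q (ξ/a^(k+1)))
          = a^(n+1) * ∫ η in (-(a/4))..(a/4), f η := by
        have h := intervalIntegral.integral_comp_mul_left
          (f := fun ξ : ℝ => M0 (ξ/a^(n+1+1)) * ∏ k ∈ Finset.range (n+1), Q (ξ/a^(k+1)))
          (a := -(a/4)) (b := a/4) (ne_of_gt (hapow (n+1)))
        rw [show a^(n+1)*(-(a/4)) = -(a^(n+1+1)/4) by rw [pow_succ a (n+1)]; ring,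
          show a^(n+1)*(a/4) = a^(n+1+1)/4 by rw [pow_succ a (n+1)]; ring] at h
        have h2 : (∫ x in (-(a/4))..(a/4),
            M0 ((a^(n+1)*x)/a^(n+1+1)) * ∏ k ∈ Finset.range (n+1), Q ((a^(n+1)*x)/a^(k+1)))
            = ∫ x in (-(a/4))..(a/4), f x :=
          intervalIntegral.integral_congr (fun x _ => hA x)
        rw [h2] at h
        rw [h, smul_eq_mul, ← mul_assoc, mul_inv_cancel₀ (ne_of_gt (hapow (n+1))), one_mul]
      -- Step C : splitting into 2N pieces and averaging
      have hpieces : ∀ p : ℕ,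
          (∫ x in (-(a/4) + ((p:ℕ):ℝ)*(1/2))..(-(a/4) + (((p+1):ℕ):ℝ)*(1/2)), f x)
          = ∫ x in (-(a/4))..(-(a/4)+1/2), f (x + (p:ℝ)*(1/2)) := by
        intro p
        rw [intervalIntegral.integral_comp_add_right]
        congr 1 <;> push_cast <;> ring
      have hsum := intervalIntegral.sum_integral_adjacent_intervals
        (f := f) (μ := volume) (a := fun p : ℕ => -(a/4) + ((p:ℕ):ℝ)*(1/2)) (n := 2*N)
        (fun k _ => hfint _ _)
      have he0 : -(a/4) + (((0:ℕ)):ℝ)*(1/2) = (-(a/4) : ℝ) := by norm_num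
      have he1 : -(a/4) + (((2*N:ℕ)):ℝ)*(1/2) = (a/4 : ℝ) := by
        push_cast; rw [ha_def]; ring
      rw [he0, he1] at hsum
      have hD : (∫ η in (-(a/4))..(a/4), f η)
          = ∫ x in (-(a/4))..(-(a/4)+1/2),
              (∑ p ∈ Finset.range (2*N), f (x + (p:ℝ)*(1/2))) := by
        rw [← hsum]
        rw [intervalIntegral.integral_finset_sum (fun p _ => hftint _ _ _)]
        exact Finset.sum_congr rfl fun p _ => hpieces p
      have hE : (∫ x in (-(a/4))..(-(a/4)+1/2),
          (∑ p ∈ Finset.range (2*N), f (x + (p:ℝ)*(1/2))))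
          = ∫ x in (-(a/4))..(-(a/4)+1/2), M0 x * G x := by
        refine intervalIntegral.integral_congr_ae ?_
        filter_upwards [hkey] with x hx _
        calc (∑ p ∈ Finset.range (2*N), f (x + (p:ℝ)*(1/2)))
            = ∑ p ∈ Finset.range (2*N),
                M0 ((x + (p:ℝ)*(1/2))/a) * (G x * Q (x + (p:ℝ)*(1/2))) := by
              refine Finset.sum_congr rfl fun p _ => ?_
              rw [hf_def]
              simp only []
              rw [hGnat p x]
          _ = G x * ∑ p ∈ Finset.range (2*N),
                Q (x + (p:ℝ)*(1/2)) * M0 ((x + (p:ℝ)*(1/2))/a) := by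
              rw [Finset.mul_sum]
              exact Finset.sum_congr rfl fun p _ => by ring
          _ = G x * M0 x := by rw [hx]
          _ = M0 x * G x := by ring
      have hF : (∫ x in (-(a/4))..(-(a/4)+1/2), M0 x * G x)
          = ∫ x in (-(1/4) : ℝ)..(-(1/4)+1/2), M0 x * G x :=
        (hM0per.mul hGper).intervalIntegral_add_eq (-(a/4)) (-(1/4))
      -- Step D : scaling back
      have hG1 : (∫ ξ in (-(a^(n+1)/4))..(a^(n+1)/4),
          M0 (ξ/a^(n+1)) * ∏ k ∈ Finset.range n, Q (ξ/a^(k+1)))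
          = a^(n+1) * ∫ x in (-(1/4) : ℝ)..(1/4 : ℝ), M0 x * G x := by
        have h := intervalIntegral.integral_comp_div (f := fun x : ℝ => M0 x * G x)
          (a := -(a^(n+1)/4)) (b := a^(n+1)/4) (ne_of_gt (hapow (n+1)))
        have hq2 : (a^(n+1)/4)/a^(n+1) = (1/4:ℝ) := by
          rw [div_div, mul_comm, ← div_div, div_self (ne_of_gt (hapow (n+1)))]
        rw [show -(a^(n+1)/4)/a^(n+1) = (-(1/4) : ℝ) by rw [neg_div, hq2], hq2] at h
        have h2 : (∫ ξ in (-(a^(n+1)/4))..(a^(n+1)/4), M0 (ξ/a^(n+1)) * G (ξ/a^(n+1)))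
            = ∫ ξ in (-(a^(n+1)/4))..(a^(n+1)/4),
                M0 (ξ/a^(n+1)) * ∏ k ∈ Finset.range n, Q (ξ/a^(k+1)) := by
          refine intervalIntegral.integral_congr (fun ξ _ => ?_)
          congr 1
          rw [hG_def]
          refine Finset.prod_congr rfl fun k hk => ?_
          have hk' : k < n := Finset.mem_range.1 hk
          congr 1
          rw [show a^(n+1) = a^(n-k) * a^(k+1) by rw [← pow_add]; congr 1; omega]
          rw [mul_div_assoc']
          rw [mul_div_mul_left _ _ (ne_of_gt (hapow (n-k)))]
        rw [h2] at h
        rw [h, smul_eq_mul]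
      rw [hB, hD, hE, hF, show (-(1/4) : ℝ)+1/2 = (1/4 : ℝ) by norm_num, ← hG1]
      exact ih
  -- the key analytic bound
  have hintP : ∀ n : ℕ, IntervalIntegrable (P n) volume (-(a ^ (n+1) / 4)) (a ^ (n+1) / 4) := by
    intro n
    refine intervalIntegrable_of_bdd (hPmeas n) (C := 4^(n+1)) ?_ _ _
    filter_upwards [hQdiv_all] with ξ h
    exact hprodbdd (n+1) _ (fun k => hQnonneg' _) (fun k => h k)
  have hbound : ∀ n : ℕ, (∫ ξ in (-(a ^ (n+1) / 4))..(a ^ (n+1) / 4), P n ξ) ≤ 1 := by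
    intro n
    have hmono : ∀ ξ ∈ Set.Icc (-(a ^ (n+1) / 4)) (a ^ (n+1) / 4), P n ξ ≤
        2 * (M0 (ξ/a^(n+1)) * ∏ k ∈ Finset.range n, Q (ξ/a^(k+1))) := by
      intro ξ _
      simp only [hP_def]
      rw [Finset.prod_range_succ]
      calc (∏ k ∈ Finset.range n, Q (ξ/a^(k+1))) * Q (ξ/a^(n+1))
          ≤ (∏ k ∈ Finset.range n, Q (ξ/a^(k+1))) * (2 * M0 (ξ/a^(n+1))) := by
            refine mul_le_mul_of_nonneg_left (hQ2M _) ?_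
            exact Finset.prod_nonneg fun k _ => hQnonneg' _
        _ = 2 * (M0 (ξ/a^(n+1)) * ∏ k ∈ Finset.range n, Q (ξ/a^(k+1))) := by ring
    have hle : -(a ^ (n+1) / 4) ≤ a ^ (n+1) / 4 := by nlinarith [hapow (n+1)]
    calc (∫ ξ in (-(a ^ (n+1) / 4))..(a ^ (n+1) / 4), P n ξ)
        ≤ ∫ ξ in (-(a ^ (n+1) / 4))..(a ^ (n+1) / 4),
            2 * (M0 (ξ/a^(n+1)) * ∏ k ∈ Finset.range n, Q (ξ/a^(k+1))) := by
          exact intervalIntegral.integral_mono_on hle (hintP n)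
            ((hFint n _ _).const_mul 2) hmono
      _ = 2 * ∫ ξ in (-(a ^ (n+1) / 4))..(a ^ (n+1) / 4),
            M0 (ξ/a^(n+1)) * ∏ k ∈ Finset.range n, Q (ξ/a^(k+1)) := by
          rw [intervalIntegral.integral_const_mul]
      _ = 1 := by rw [hRR n]; norm_num
  have hQnonneg : ∀ ξ, 0 ≤ Q ξ := fun ξ => by positivity
  have hPnonneg : ∀ n ξ, 0 ≤ P n ξ := fun n ξ =>
    Finset.prod_nonneg fun k _ => hQnonneg _
  -- lintegral bound
  have hlint : ∀ n : ℕ, (∫⁻ ξ in Set.Ioc (-(a ^ (n+1) / 4)) (a ^ (n+1) / 4),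
      ENNReal.ofReal (P n ξ)) ≤ 1 := by
    intro n
    have hle : -(a ^ (n+1) / 4) ≤ a ^ (n+1) / 4 := by nlinarith [hapow (n+1)]
    have hInt : IntegrableOn (P n) (Set.Ioc (-(a ^ (n+1) / 4)) (a ^ (n+1) / 4)) volume := by
      have := hintP n
      rwa [intervalIntegrable_iff_integrableOn_Ioc_of_le hle] at this
    rw [← MeasureTheory.ofReal_integral_eq_lintegral_ofReal hInt
      (ae_of_all _ fun ξ => hPnonneg n ξ)]
    have : (∫ ξ in Set.Ioc (-(a ^ (n+1) / 4)) (a ^ (n+1) / 4), P n ξ) ≤ 1 := by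
      rw [← intervalIntegral.integral_of_le hle]
      exact hbound n
    calc ENNReal.ofReal (∫ ξ in Set.Ioc (-(a ^ (n+1) / 4)) (a ^ (n+1) / 4), P n ξ)
        ≤ ENNReal.ofReal 1 := ENNReal.ofReal_le_ofReal this
      _ = 1 := ENNReal.ofReal_one
  -- Fatou
  set S : ℕ → Set ℝ := fun n => Set.Ioc (-(a ^ (n+1) / 4)) (a ^ (n+1) / 4) with hS_def
  set g : ℕ → ℝ → ENNReal := fun n => (S n).indicator (fun ξ => ENNReal.ofReal (P n ξ))
    with hg_def
  have hgmeas : ∀ n, AEMeasurable (g n) (volume : Measure ℝ) := by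
    intro n
    exact ((hPmeas n).aemeasurable.ennreal_ofReal).indicator measurableSet_Ioc
  have hglint : ∀ n, (∫⁻ ξ, g n ξ) ≤ 1 := by
    intro n
    rw [hg_def, lintegral_indicator measurableSet_Ioc]
    exact hlint n
  have haelim : ∀ᵐ ξ : ℝ, Tendsto (fun n => g n ξ) atTop
      (nhds (ENNReal.ofReal (‖φhat ξ‖ ^ 2))) := by
    filter_upwards [hprod] with ξ hξ
    have h1 : Tendsto (fun n => P n ξ) atTop (nhds (‖φhat ξ‖ ^ 2)) := by
      have heq : ∀ n, P n ξ = ‖∏ j ∈ Finset.range (n+1), m0 (ξ / a ^ (j+1))‖ ^ 2 := by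
        intro n
        simp only [hP_def, hQ_def]
        rw [norm_prod, ← Finset.prod_pow]
      have h2 : Tendsto (fun n : ℕ => ∏ j ∈ Finset.range (n+1), m0 (ξ / a ^ (j+1))) atTop
          (nhds (φhat ξ)) := hξ.comp (Filter.tendsto_add_atTop_nat 1)
      have h3 := ((continuous_norm.pow 2).tendsto (φhat ξ)).comp h2
      exact h3.congr fun n => (heq n).symm
    have h4 : Tendsto (fun n => ENNReal.ofReal (P n ξ)) atTop
        (nhds (ENNReal.ofReal (‖φhat ξ‖ ^ 2))) :=
      (ENNReal.continuous_ofReal.tendsto _).comp h1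
    refine h4.congr' ?_
    have hAT : Tendsto (fun n : ℕ => a ^ (n+1) / 4) atTop atTop := by
      exact ((tendsto_pow_atTop_atTop_of_one_lt ha1).comp
        (Filter.tendsto_add_atTop_nat 1)).atTop_div_const (by norm_num)
    filter_upwards [hAT.eventually_ge_atTop (|ξ| + 1)] with n hn
    have hmem : ξ ∈ S n := by
      have hb := abs_lt.1 (lt_of_lt_of_le (lt_add_one |ξ|) hn)
      rw [hS_def]
      exact ⟨by linarith [hb.1], by linarith [hb.2]⟩
    rw [hg_def]
    simp only [Set.indicator_of_mem hmem]
  have hfatou : (∫⁻ ξ, ENNReal.ofReal (‖φhat ξ‖ ^ 2)) ≤ 1 := by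
    have h1 : (∫⁻ ξ, ENNReal.ofReal (‖φhat ξ‖ ^ 2))
        = ∫⁻ ξ, Filter.liminf (fun n => g n ξ) atTop := by
      refine lintegral_congr_ae ?_
      filter_upwards [haelim] with ξ hξ
      exact (hξ.liminf_eq).symm
    rw [h1]
    calc (∫⁻ ξ, Filter.liminf (fun n => g n ξ) atTop)
        ≤ Filter.liminf (fun n => ∫⁻ ξ, g n ξ) atTop := lintegral_liminf_le' hgmeas
      _ ≤ Filter.liminf (fun _ : ℕ => (1 : ENNReal)) atTop :=
          Filter.liminf_le_liminf (.of_forall hglint)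
      _ = 1 := Filter.liminf_const 1
  have hnnint : (∫⁻ ξ, ((‖φhat ξ‖₊ : ENNReal)) ^ 2) ≤ 1 := by
    refine le_trans (le_of_eq (lintegral_congr fun ξ => ?_)) hfatou
    rw [ENNReal.ofReal_pow (norm_nonneg _), ofReal_norm, enorm_eq_nnnorm]
  constructor
  · refine ⟨hφm, ?_⟩
    rw [MeasureTheory.eLpNorm_eq_lintegral_rpow_enorm_toReal (by norm_num) (by norm_num)]
    have htr : (2 : ENNReal).toReal = 2 := by norm_num
    rw [htr]
    have h2 : (∫⁻ ξ, ((‖φhat ξ‖₊ : ENNReal)) ^ (2:ℝ)) ≤ 1 := by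
      refine le_trans (le_of_eq (lintegral_congr fun ξ => ?_)) hnnint
      rw [← ENNReal.rpow_natCast (‖φhat ξ‖₊ : ENNReal) 2]
      norm_num
    calc (∫⁻ ξ, ((‖φhat ξ‖₊ : ENNReal)) ^ (2:ℝ)) ^ (1/(2:ℝ))
        ≤ (1 : ENNReal) ^ (1/(2:ℝ)) := by
          exact ENNReal.rpow_le_rpow h2 (by norm_num)
      _ = 1 := ENNReal.one_rpow _
      _ < ⊤ := ENNReal.one_lt_top
  · have hsm : AEStronglyMeasurable (fun ξ => ‖φhat ξ‖ ^ 2) (volume : Measure ℝ) :=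
      hφm.norm.pow 2
    rw [MeasureTheory.integral_eq_lintegral_of_nonneg_ae
      (ae_of_all _ fun ξ => by positivity) hsm]
    calc (∫⁻ ξ, ENNReal.ofReal (‖φhat ξ‖ ^ 2)).toReal
        ≤ (1 : ENNReal).toReal := ENNReal.toReal_mono (by norm_num) hfatou
      _ = 1 := by norm_num

end
end

section
/- Define ϕ = χ_{A_N} where A_N = ⋃_{j=0}^{N−1} [2j/N, (2j+1)/N). Then the translates {ϕ(t − λ) : λ ∈ Ω}, where Ω = {0, 1/N} + 2ℤ, form an orthonormal system in L²(ℝ). -/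
open MeasureTheory Complex Real ComplexConjugate

noncomputable section

/-- The set A_N = ⋃_{j=0}^{N−1} [2j/N, (2j+1)/N). -/
def haarSet (N : ℕ) : Set ℝ :=
  ⋃ j ∈ Finset.range N, Set.Ico ((2 * j : ℝ) / N) ((2 * j + 1 : ℝ) / N)

/-- The nonuniform Haar scaling function ϕ = χ_{A_N}. -/
def haarScaling (N : ℕ) : ℝ → ℂ := Set.indicator (haarSet N) (fun _ => (1 : ℂ))

lemma mem_haarSet_iff (N : ℕ) (hN : 1 ≤ N) (x : ℝ) :
    x ∈ haarSet N ↔ 0 ≤ x ∧ x < 2 ∧ Even ⌊(N : ℝ) * x⌋ := by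
  have hN0 : (0:ℝ) < N := by exact_mod_cast Nat.lt_of_lt_of_le Nat.zero_lt_one hN
  constructor
  · intro hx
    simp only [haarSet, Set.mem_iUnion, Finset.mem_range, Set.mem_Ico] at hx
    obtain ⟨j, hj, h1, h2⟩ := hx
    have hj' : (j:ℝ) ≤ (N:ℝ) - 1 := by
      have : (j:ℝ) + 1 ≤ N := by exact_mod_cast hj
      linarith
    have hx0 : 0 ≤ x := le_trans (by positivity) h1
    have hlb : (2*j : ℝ) ≤ N * x := by
      have := (div_le_iff₀ hN0).mp h1; linarith
    have hub : (N:ℝ) * x < 2*j + 1 := by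
      have := (lt_div_iff₀ hN0).mp h2; linarith
    refine ⟨hx0, ?_, ?_⟩
    · have : (N:ℝ) * x < 2 * N := by linarith
      nlinarith
    · have hfl : ⌊(N:ℝ) * x⌋ = 2 * (j:ℤ) := by
        rw [Int.floor_eq_iff]
        constructor <;> push_cast <;> linarith
      exact ⟨j, by omega⟩
  · rintro ⟨hx0, hx2, ⟨r, hr⟩⟩
    have hk1 : ((2*r : ℤ):ℝ) ≤ (N:ℝ) * x := by
      have := Int.floor_le ((N:ℝ)*x); rw [hr] at this; push_cast; push_cast at this; linarith
    have hk2 : (N:ℝ) * x < (2*r : ℤ) + 1 := by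
      have := Int.lt_floor_add_one ((N:ℝ)*x); rw [hr] at this; push_cast; push_cast at this; linarith
    have hr0 : 0 ≤ r := by
      by_contra h
      push_neg at h
      have : ((2*r:ℤ):ℝ) + 1 ≤ 0 := by exact_mod_cast by omega
      nlinarith
    have hrN : r < N := by
      by_contra h
      push_neg at h
      have hh : (N:ℝ) ≤ (r:ℝ) := by exact_mod_cast h
      push_cast at hk1 hk2
      nlinarith [mul_lt_mul_of_pos_left hx2 hN0]
    simp only [haarSet, Set.mem_iUnion, Finset.mem_range, Set.mem_Ico]
    refine ⟨r.toNat, ?_, ?_, ?_⟩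
    · omega
    · rw [div_le_iff₀ hN0]
      have hcast : (r.toNat : ℝ) = (r : ℝ) := by exact_mod_cast Int.toNat_of_nonneg hr0
      push_cast at hk1
      rw [hcast]
      nlinarith
    · rw [lt_div_iff₀ hN0]
      have hcast : (r.toNat : ℝ) = (r : ℝ) := by exact_mod_cast Int.toNat_of_nonneg hr0
      push_cast at hk2
      rw [hcast]
      nlinarith

lemma floor_even_shift (N : ℕ) (hN : 1 ≤ N) (t : ℝ) (m : ℤ)
    (h : Even ⌊(N:ℝ) * (t - 2*(m:ℝ))⌋) : Even ⌊(N:ℝ)*t⌋ := by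
  have e1 : (N:ℝ)*(t - 2*(m:ℝ)) = (N:ℝ)*t - ((2*m*N : ℤ):ℝ) := by push_cast; ring
  rw [e1, Int.floor_sub_intCast, Int.even_sub] at h
  exact h.mpr ⟨m*N, by ring⟩

lemma floor_odd_shift (N : ℕ) (hN : 1 ≤ N) (t : ℝ) (m : ℤ)
    (h : Even ⌊(N:ℝ) * (t - (1/(N:ℝ) + 2*(m:ℝ)))⌋) : Odd ⌊(N:ℝ)*t⌋ := by
  have hN0 : (0:ℝ) < N := by exact_mod_cast Nat.lt_of_lt_of_le Nat.zero_lt_one hN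
  have e1 : (N:ℝ)*(t - (1/(N:ℝ) + 2*(m:ℝ))) = (N:ℝ)*t - ((1 + 2*m*N : ℤ):ℝ) := by
    push_cast; field_simp
  rw [e1, Int.floor_sub_intCast, Int.even_sub] at h
  rcases Int.even_or_odd ⌊(N:ℝ)*t⌋ with he | ho
  · exfalso
    have : Even (1 + 2*m*N : ℤ) := h.mp he
    obtain ⟨l, hl⟩ : Even (2*m*N:ℤ) := ⟨m*N, by ring⟩
    rcases this with ⟨k, hk⟩
    omega
  · exact ho

lemma omega_unique (N : ℕ) (hN : 1 ≤ N) {lam sig t : ℝ}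
    (hlam : lam ∈ Omega N 1) (hsig : sig ∈ Omega N 1)
    (h1 : t - lam ∈ haarSet N) (h2 : t - sig ∈ haarSet N) : lam = sig := by
  have hN0 : (0:ℝ) < N := by exact_mod_cast Nat.lt_of_lt_of_le Nat.zero_lt_one hN
  obtain ⟨m, hm⟩ := hlam
  obtain ⟨m', hm'⟩ := hsig
  rw [mem_haarSet_iff N hN] at h1 h2
  obtain ⟨a1, b1, c1⟩ := h1
  obtain ⟨a2, b2, c2⟩ := h2
  have hone : ((1:ℤ):ℝ) = (1:ℝ) := by norm_num
  rcases hm with hm | hm <;> rcases hm' with hm' | hm'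
  · -- both even type
    rw [hm, hm']
    have : m = m' := by
      have h1' : ((m:ℝ)) < (m':ℝ) + 1 := by rw [hm] at a1 b1; rw [hm'] at a2 b2; linarith
      have h2' : ((m':ℝ)) < (m:ℝ) + 1 := by rw [hm] at a1 b1; rw [hm'] at a2 b2; linarith
      have h1'' : m < m' + 1 := by exact_mod_cast h1'
      have h2'' : m' < m + 1 := by exact_mod_cast h2'
      omega
    rw [this]
  · -- lam even type, sig odd type: parity contradiction
    exfalso
    rw [hm] at c1
    rw [hm', hone] at c2
    have he : Even ⌊(N:ℝ)*t⌋ := floor_even_shift N hN t m c1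
    have ho : Odd ⌊(N:ℝ)*t⌋ := floor_odd_shift N hN t m' c2
    exact (Int.not_odd_iff_even.mpr he) ho
  · exfalso
    rw [hm'] at c2
    rw [hm, hone] at c1
    have he : Even ⌊(N:ℝ)*t⌋ := floor_even_shift N hN t m' c2
    have ho : Odd ⌊(N:ℝ)*t⌋ := floor_odd_shift N hN t m c1
    exact (Int.not_odd_iff_even.mpr he) ho
  · rw [hm, hm']
    have : m = m' := by
      have h1' : ((m:ℝ)) < (m':ℝ) + 1 := by rw [hm] at a1 b1; rw [hm'] at a2 b2; push_cast at a1 b1 a2 b2; linarith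
      have h2' : ((m':ℝ)) < (m:ℝ) + 1 := by rw [hm] at a1 b1; rw [hm'] at a2 b2; push_cast at a1 b1 a2 b2; linarith
      have h1'' : m < m' + 1 := by exact_mod_cast h1'
      have h2'' : m' < m + 1 := by exact_mod_cast h2'
      omega
    rw [this]

lemma measurableSet_haarSet (N : ℕ) : MeasurableSet (haarSet N) :=
  Set.Finite.measurableSet_biUnion (Finset.range N).finite_toSet fun _ _ => measurableSet_Ico

lemma volume_haarSet (N : ℕ) (hN : 1 ≤ N) : volume (haarSet N) = 1 := by
  have hN0 : (0:ℝ) < N := by exact_mod_cast Nat.lt_of_lt_of_le Nat.zero_lt_one hN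
  rw [haarSet, measure_biUnion_finset]
  · have hc : ∀ j ∈ Finset.range N,
        volume (Set.Ico ((2*j:ℝ)/N) ((2*j+1:ℝ)/N)) = ENNReal.ofReal (1/N) := by
      intro j _
      rw [Real.volume_Ico]
      congr 1
      field_simp
      ring
    rw [Finset.sum_congr rfl hc, Finset.sum_const, Finset.card_range, nsmul_eq_mul,
      ← ENNReal.ofReal_natCast, ← ENNReal.ofReal_mul (by positivity),
      mul_one_div, div_self (ne_of_gt hN0), ENNReal.ofReal_one]
  · intro i hi j hj hij
    simp only [Finset.mem_coe, Finset.mem_range] at hi hj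
    apply Set.Ico_disjoint_Ico.mpr
    rcases lt_or_gt_of_ne hij with h | h
    · have : (2*(i:ℝ)+1)/N ≤ (2*(j:ℝ))/N := by
        gcongr
        have : (i:ℝ) + 1 ≤ (j:ℝ) := by exact_mod_cast h
        linarith
      calc min ((2*(i:ℝ)+1)/N) ((2*(j:ℝ)+1)/N) ≤ (2*(i:ℝ)+1)/N := min_le_left _ _
        _ ≤ (2*(j:ℝ))/N := this
        _ ≤ max ((2*(i:ℝ))/N) ((2*(j:ℝ))/N) := le_max_right _ _
    · have : (2*(j:ℝ)+1)/N ≤ (2*(i:ℝ))/N := by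
        gcongr
        have : (j:ℝ) + 1 ≤ (i:ℝ) := by exact_mod_cast h
        linarith
      calc min ((2*(i:ℝ)+1)/N) ((2*(j:ℝ)+1)/N) ≤ (2*(j:ℝ)+1)/N := min_le_right _ _
        _ ≤ (2*(i:ℝ))/N := this
        _ ≤ max ((2*(i:ℝ))/N) ((2*(j:ℝ))/N) := le_max_left _ _
  · intro j _
    exact measurableSet_Ico

/-- The Ω-translates of χ_{A_N}, with Ω = {0, 1/N} + 2ℤ, are orthonormal. -/
theorem haarScaling_orthonormal (N : ℕ) (hN : 1 ≤ N) :
    ∀ lam ∈ Omega N 1, ∀ sig ∈ Omega N 1,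
      ∫ t : ℝ, haarScaling N (t - lam) * conj (haarScaling N (t - sig))
        = if lam = sig then 1 else 0 := by
  intro lam hlam sig hsig
  set S : Set ℝ := ((fun t => t - lam) ⁻¹' haarSet N) ∩ ((fun t => t - sig) ⁻¹' haarSet N)
    with hSdef
  have hmS : MeasurableSet S :=
    ((measurableSet_haarSet N).preimage (measurable_sub_const lam)).inter
      ((measurableSet_haarSet N).preimage (measurable_sub_const sig))
  have hpt : ∀ t : ℝ, haarScaling N (t - lam) * conj (haarScaling N (t - sig))
      = S.indicator (fun _ => (1:ℂ)) t := by
    intro t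
    unfold haarScaling
    by_cases h1 : t - lam ∈ haarSet N <;> by_cases h2 : t - sig ∈ haarSet N <;>
      simp [Set.indicator, hSdef, Set.mem_preimage, h1, h2]
  simp only [hpt]
  rw [integral_indicator_const _ hmS]
  by_cases h : lam = sig
  · subst h
    simp only [if_pos rfl]
    have hSeq : S = (fun t => t - lam) ⁻¹' haarSet N := by
      rw [hSdef, Set.inter_self]
    rw [hSeq, measureReal_def, (measurePreserving_sub_right volume lam).measure_preimage
      (measurableSet_haarSet N).nullMeasurableSet, volume_haarSet N hN]
    simp
  · simp only [if_neg h]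
    have hSempty : S = ∅ := by
      rw [Set.eq_empty_iff_forall_notMem]
      rintro t ⟨ht1, ht2⟩
      exact h (omega_unique N hN hlam hsig ht1 ht2)
    rw [hSempty]
    simp

end
end

section
/- With W_j the orthogonal complement of V_j in V_{j+1} for an LCT-NUMRA, and U_{j,n} the wavelet packet spaces, for every j ≥ 0 and 0 ≤ m ≤ j one has W_j = ⊕_{ℓ=(2N)^m}^{(2N)^{m+1}−1} U_{j−m, ℓ}; in particular W_j = ⊕_{ℓ=(2N)^j}^{(2N)^{j+1}−1} U_{0,ℓ}, and consequently L²(ℝ) = ⊕_{j∈ℤ} W_j admits the wavelet packet decomposition L²(ℝ) = ⊕_{j∈ℤ} ⊕_{ℓ=(2N)^m}^{(2N)^{m+1}−1} U_{j−m,ℓ}. -/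
open MeasureTheory Complex Real

noncomputable section

private lemma tc_biSup_tc {H : Type*} [NormedAddCommGroup H] [Module ℂ H]
    [TopologicalSpace H] [ContinuousAdd H] [ContinuousConstSMul ℂ H]
    {ι : Type*} (s : Finset ι) (S : ι → Submodule ℂ H) :
    (⨆ i ∈ s, (S i).topologicalClosure).topologicalClosure
      = (⨆ i ∈ s, S i).topologicalClosure := by
  apply le_antisymm
  · refine Submodule.topologicalClosure_minimal _ ?_
      (Submodule.isClosed_topologicalClosure _)
    refine iSup₂_le fun i hi => ?_
    exact Submodule.topologicalClosure_mono (le_iSup₂ (f := fun i _ => S i) i hi)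
  · exact Submodule.topologicalClosure_mono
      (iSup₂_mono fun i _ => Submodule.le_topologicalClosure _)

private lemma index_reindex {H : Type*} [NormedAddCommGroup H] [Module ℂ H]
    (N : ℕ) (hN : 1 ≤ N) (a b : ℕ) (Uf : ℕ → Submodule ℂ H) :
    (⨆ n ∈ Finset.Ico a b, ⨆ l ∈ Finset.range (2 * N), Uf (2 * N * n + l))
      = ⨆ ℓ ∈ Finset.Ico (2 * N * a) (2 * N * b), Uf ℓ := by
  have hpos : 0 < 2 * N := by omega
  apply le_antisymm
  · refine iSup₂_le fun n hn => iSup₂_le fun l hl => ?_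
    simp only [Finset.mem_Ico] at hn
    simp only [Finset.mem_range] at hl
    refine le_iSup₂ (f := fun ℓ _ => Uf ℓ) (2 * N * n + l) ?_
    simp only [Finset.mem_Ico]
    constructor
    · nlinarith [hn.1]
    · nlinarith [hn.2]
  · refine iSup₂_le fun ℓ hℓ => ?_
    simp only [Finset.mem_Ico] at hℓ
    have hmod : 2 * N * (ℓ / (2 * N)) + ℓ % (2 * N) = ℓ := Nat.div_add_mod ℓ (2 * N)
    have hn : ℓ / (2 * N) ∈ Finset.Ico a b := by
      simp only [Finset.mem_Ico]
      constructor
      · exact (Nat.le_div_iff_mul_le hpos).2 (by rw [Nat.mul_comm]; exact hℓ.1)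
      · exact Nat.div_lt_of_lt_mul (by linarith [hℓ.2])
    have hl : ℓ % (2 * N) ∈ Finset.range (2 * N) := by
      simp only [Finset.mem_range]; exact Nat.mod_lt _ hpos
    calc Uf ℓ = Uf (2 * N * (ℓ / (2 * N)) + ℓ % (2 * N)) := by rw [hmod]
    _ ≤ ⨆ l ∈ Finset.range (2 * N), Uf (2 * N * (ℓ / (2 * N)) + l) :=
        le_iSup₂ (f := fun l _ => Uf (2 * N * (ℓ / (2 * N)) + l)) (ℓ % (2 * N)) hl
    _ ≤ _ := le_iSup₂ (f := fun n _ => ⨆ l ∈ Finset.range (2 * N), Uf (2 * N * n + l))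
        (ℓ / (2 * N)) hn

/-- Orthogonal decomposition of the wavelet subspaces W_j = V_{j+1} ⊖ V_j of an
LCT-NUMRA into wavelet packet spaces: W_j = ⊕_{ℓ=(2N)^m}^{(2N)^{m+1}−1} U_{j−m,ℓ}
for 0 ≤ m ≤ j, and consequently L²(ℝ) = ⊕_{j∈ℤ} W_j yields the wavelet packet
decomposition of L²(ℝ). -/
theorem waveletPacket_decomposition (N : ℕ) (hN : 1 ≤ N)
    (V : ℤ → Submodule ℂ (Lp ℂ 2 (volume : Measure ℝ)))
    (U : ℤ → ℕ → Submodule ℂ (Lp ℂ 2 (volume : Measure ℝ)))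
    (hclosedV : ∀ j : ℤ, IsClosed (V j : Set (Lp ℂ 2 (volume : Measure ℝ))))
    (hmono : ∀ j : ℤ, V j ≤ V (j + 1))
    (hdense : (⨆ j : ℤ, V j).topologicalClosure = ⊤)
    (htriv : (⨅ j : ℤ, V j) = ⊥)
    (hclosedU : ∀ (j : ℤ) (n : ℕ), IsClosed (U j n : Set (Lp ℂ 2 (volume : Measure ℝ))))
    (hU0 : ∀ j : ℤ, U j 0 = V j)
    (hW : ∀ j : ℤ, V (j + 1) ⊓ (V j)ᗮ
        = (⨆ l ∈ Finset.Ico 1 (2 * N), U j l).topologicalClosure)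
    (hsplit : ∀ (j : ℤ) (n : ℕ), U j n
        = (⨆ l ∈ Finset.range (2 * N), U (j - 1) (2 * N * n + l)).topologicalClosure)
    (horthU : ∀ (j : ℤ) (n₁ n₂ : ℕ), n₁ ≠ n₂ →
        ∀ f ∈ U j n₁, ∀ g ∈ U j n₂, @inner ℂ _ _ f g = (0 : ℂ)) :
    (∀ j : ℤ, 0 ≤ j → ∀ m : ℕ, (m : ℤ) ≤ j →
      V (j + 1) ⊓ (V j)ᗮ
        = (⨆ l ∈ Finset.Ico ((2 * N) ^ m) ((2 * N) ^ (m + 1)),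
            U (j - m) l).topologicalClosure) ∧
    (⨆ j : ℤ, V (j + 1) ⊓ (V j)ᗮ).topologicalClosure = ⊤ := by
  constructor
  · -- First part: induction on m
    intro j hj m
    induction m with
    | zero =>
      intro _
      simpa using hW j
    | succ m ih =>
      intro hm
      have hm' : (m : ℤ) ≤ j := by push_cast at hm ⊢; omega
      rw [ih hm']
      have h1 : (⨆ n ∈ Finset.Ico ((2 * N) ^ m) ((2 * N) ^ (m + 1)), U (j - m) n)
          = ⨆ n ∈ Finset.Ico ((2 * N) ^ m) ((2 * N) ^ (m + 1)),
              (⨆ l ∈ Finset.range (2 * N), U (j - m - 1) (2 * N * n + l)).topologicalClosure := by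
        refine biSup_congr fun n _ => hsplit (j - m) n
      rw [h1, tc_biSup_tc, index_reindex N hN]
      have h2 : 2 * N * (2 * N) ^ m = (2 * N) ^ (m + 1) := (pow_succ' (2 * N) m).symm
      have h3 : 2 * N * (2 * N) ^ (m + 1) = (2 * N) ^ (m + 1 + 1) :=
        (pow_succ' (2 * N) (m + 1)).symm
      have h4 : j - (m : ℤ) - 1 = j - ((m : ℕ) + 1 : ℕ) := by push_cast; ring
      rw [h2, h3, h4]
  · -- Second part: density
    haveI : ∀ j : ℤ, CompleteSpace (V j) := fun j => (hclosedV j).completeSpace_coe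
    rw [Submodule.topologicalClosure_eq_top_iff]
    rw [Submodule.topologicalClosure_eq_top_iff] at hdense
    rw [Submodule.eq_bot_iff]
    intro f hf
    -- f is orthogonal to every W_j
    have hfW : ∀ j : ℤ, ∀ w ∈ V (j + 1) ⊓ (V j)ᗮ, @inner ℂ _ _ w f = (0 : ℂ) := by
      intro j w hw
      exact hf w (Submodule.mem_iSup_of_mem j hw)
    -- projections agree at consecutive levels
    have stepA : ∀ j : ℤ,
        ((Submodule.orthogonalProjection (V (j + 1)) f : Lp ℂ 2 (volume : Measure ℝ)))
          = Submodule.orthogonalProjection (V j) f := by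
      intro j
      apply Submodule.eq_starProjection_of_mem_of_inner_eq_zero
      · exact hmono j (Submodule.orthogonalProjection (V j) f).2
      · intro w hw
        set p := (Submodule.orthogonalProjection (V j) f : Lp ℂ 2 (volume : Measure ℝ))
        have hdecomp : w = (Submodule.orthogonalProjection (V j) w : Lp ℂ 2 (volume : Measure ℝ))
            + (w - Submodule.orthogonalProjection (V j) w) := by abel
        have hw' : (w - (Submodule.orthogonalProjection (V j) w : Lp ℂ 2 (volume : Measure ℝ)))
            ∈ V (j + 1) ⊓ (V j)ᗮ := by
          refine ⟨Submodule.sub_mem _ hw (hmono j (Submodule.orthogonalProjection (V j) w).2), ?_⟩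
          exact Submodule.sub_starProjection_mem_orthogonal w
        rw [hdecomp, inner_add_right]
        have e1 : @inner ℂ _ _ (f - p)
            ((Submodule.orthogonalProjection (V j) w : Lp ℂ 2 (volume : Measure ℝ))) = 0 :=
          Submodule.starProjection_inner_eq_zero f _ (Submodule.orthogonalProjection (V j) w).2
        have e2 : @inner ℂ _ _ (f - p)
            (w - (Submodule.orthogonalProjection (V j) w : Lp ℂ 2 (volume : Measure ℝ))) = 0 := by
          rw [inner_sub_left]
          have hfz : @inner ℂ _ _ f
              (w - (Submodule.orthogonalProjection (V j) w : Lp ℂ 2 (volume : Measure ℝ))) = 0 := by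
            rw [← inner_conj_symm, hfW j _ hw', map_zero]
          have hpz : @inner ℂ _ _ p
              (w - (Submodule.orthogonalProjection (V j) w : Lp ℂ 2 (volume : Measure ℝ))) = 0 :=
            hw'.2 p (Submodule.orthogonalProjection (V j) f).2
          rw [hfz, hpz, sub_zero]
        rw [e1, e2, add_zero]
    -- all projections equal the projection onto V 0
    have allEq : ∀ j : ℤ,
        ((Submodule.orthogonalProjection (V j) f : Lp ℂ 2 (volume : Measure ℝ)))
          = Submodule.orthogonalProjection (V 0) f := by
      intro j
      induction j using Int.induction_on with
      | zero => rfl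
      | succ n ih => rw [stepA n, ih]
      | pred n ih =>
        have := stepA (-(n : ℤ) - 1)
        rw [show (-(n : ℤ) - 1 + 1) = -(n : ℤ) by ring] at this
        rw [← this, ih]
    -- the common projection lies in every V j, hence is 0
    have hg : (Submodule.orthogonalProjection (V 0) f : Lp ℂ 2 (volume : Measure ℝ)) = 0 := by
      have hmem : (Submodule.orthogonalProjection (V 0) f : Lp ℂ 2 (volume : Measure ℝ)) ∈ ⨅ j : ℤ, V j := by
        rw [Submodule.mem_iInf]
        intro j
        rw [← allEq j]
        exact (Submodule.orthogonalProjection (V j) f).2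
      rw [htriv, Submodule.mem_bot] at hmem
      exact hmem
    -- hence f ⊥ V j for every j
    have hfV : ∀ j : ℤ, f ∈ (V j)ᗮ := by
      intro j
      have : f - (Submodule.orthogonalProjection (V j) f : Lp ℂ 2 (volume : Measure ℝ)) ∈ (V j)ᗮ :=
        Submodule.sub_starProjection_mem_orthogonal (K := V j) f
      rwa [allEq j, hg, sub_zero] at this
    have : f ∈ (⨆ j : ℤ, V j)ᗮ := by
      rw [← Submodule.iInf_orthogonal]
      exact Submodule.mem_iInf _ |>.2 hfV
    rw [hdense, Submodule.mem_bot] at this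
    exact this

end
end
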